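/- arXiv:1508.05378 — 3 statements merged into one kernel-verified Lean document; each statement's English description precedes it below -/
import Mathlib

section
/- Let H be immersed in G via an immersion φ, and let C be a blob (maximal 2-edge-connected subgraph) of H. Then there is a blob D of G such that the restriction of φ to the vertices and edges of C is an immersion of C into D. -/
open SimpleGraph

/-- An immersion (strong immersion) of `H` into `G`. -/
structure Immersion {V W : Type*} (H : SimpleGraph V) (G : SimpleGraph W) where
  toFun : V → W
  injective : Function.Injective toFun
  walk : ∀ ⦃u v : V⦄, H.Adj u v → G.Walk (toFun u) (toFun v)
  walk_isPath : ∀ ⦃u v : V⦄ (h : H.Adj u v), (walk h).IsPath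
  walk_nontrivial : ∀ ⦃u v : V⦄ (h : H.Adj u v), 0 < (walk h).length
  walk_symm : ∀ ⦃u v : V⦄ (h : H.Adj u v), walk h.symm = (walk h).reverse
  walk_edgeDisjoint : ∀ ⦃u v u' v' : V⦄ (h : H.Adj u v) (h' : H.Adj u' v'),
    s(u, v) ≠ s(u', v') → ∀ e ∈ (walk h).edges, e ∉ (walk h').edges
  avoid : ∀ ⦃u v : V⦄ (h : H.Adj u v) (w : V), w ≠ u → w ≠ v → toFun w ∉ (walk h).support

/-- `H` is immersed in `G`. -/
def Immersed {V W : Type*} (H : SimpleGraph V) (G : SimpleGraph W) : Prop :=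
  Nonempty (Immersion H G)

/-- A graph is 2-edge-connected if it is connected, has an edge, and stays connected
after deletion of any single edge. -/
def TwoEdgeConnected {V : Type*} (G : SimpleGraph V) : Prop :=
  G.Connected ∧ G.edgeSet.Nonempty ∧ ∀ e ∈ G.edgeSet, (G.deleteEdges {e}).Connected

/-- A blob of `G` is a maximal 2-edge-connected subgraph of `G`. -/
def IsBlob {V : Type*} (G : SimpleGraph V) (B : G.Subgraph) : Prop :=
  TwoEdgeConnected B.coe ∧ ∀ B' : G.Subgraph, B ≤ B' → TwoEdgeConnected B'.coe → B' = B

/-- An immersion induces an isomorphism if its vertex map is a bijection preserving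
and reflecting adjacency. -/
def Immersion.InducesIso {V W : Type*} {H : SimpleGraph V} {G : SimpleGraph W}
    (φ : Immersion H G) : Prop :=
  Function.Bijective φ.toFun ∧ ∀ u v : V, H.Adj u v ↔ G.Adj (φ.toFun u) (φ.toFun v)

/-- An immersion is proper if it does not induce an isomorphism. -/
def Immersion.IsProper {V W : Type*} {H : SimpleGraph V} {G : SimpleGraph W}
    (φ : Immersion H G) : Prop := ¬ φ.InducesIso

/-- `H` is properly immersed in `G`. -/
def ProperlyImmersed {V W : Type*} (H : SimpleGraph V) (G : SimpleGraph W) : Prop :=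
  ∃ φ : Immersion H G, φ.IsProper

/-- A self-immersion is trivial if it induces the identity map on vertices and sends
each edge to itself. -/
def Immersion.IsTrivial {V : Type*} {G : SimpleGraph V} (φ : Immersion G G) : Prop :=
  (∀ v, φ.toFun v = v) ∧ ∀ ⦃u v : V⦄ (h : G.Adj u v), (φ.walk h).edges = [s(u, v)]

section AuxB

variable {W : Type*} {G : SimpleGraph W}

namespace BlobAux

def liftWalk (D : G.Subgraph) : ∀ {a b : W} (p : G.Walk a b),
    (∀ e ∈ p.edges, e ∈ D.edgeSet) → ∀ (ha : a ∈ D.verts) (hb : b ∈ D.verts),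
    D.coe.Walk ⟨a, ha⟩ ⟨b, hb⟩
  | _, _, SimpleGraph.Walk.nil, _, _, _ => SimpleGraph.Walk.nil
  | _, _, SimpleGraph.Walk.cons h q, hp, ha, hb =>
    have hadj : D.Adj _ _ := hp _ List.mem_cons_self
    SimpleGraph.Walk.cons (by exact hadj)
      (liftWalk D q (fun e he => hp e (List.mem_cons_of_mem _ he))
        (D.edge_vert hadj.symm) hb)

lemma liftWalk_map (D : G.Subgraph) : ∀ {a b : W} (p : G.Walk a b)
    (hp : ∀ e ∈ p.edges, e ∈ D.edgeSet) (ha : a ∈ D.verts) (hb : b ∈ D.verts),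
    (liftWalk D p hp ha hb).map D.hom = p
  | _, _, SimpleGraph.Walk.nil, _, _, _ => rfl
  | _, _, SimpleGraph.Walk.cons h q, hp, ha, hb => by
    simp only [liftWalk, SimpleGraph.Walk.map_cons]
    congr 1
    exact congrArg (SimpleGraph.Walk.cons h) (liftWalk_map D q _ _ _)

lemma val_injective (D : G.Subgraph) : Function.Injective (⇑D.hom) := Subgraph.hom_injective

lemma mem_edges_liftWalk {D : G.Subgraph} {a b : W} {p : G.Walk a b}
    {hp : ∀ e ∈ p.edges, e ∈ D.edgeSet} {ha : a ∈ D.verts} {hb : b ∈ D.verts}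
    {e : Sym2 D.verts} :
    e ∈ (liftWalk D p hp ha hb).edges ↔ Sym2.map (⇑D.hom) e ∈ p.edges := by
  have key2 : ((liftWalk D p hp ha hb).map D.hom).edges = p.edges :=
    congrArg (fun q : G.Walk a b => q.edges) (liftWalk_map D p hp ha hb)
  rw [← key2, SimpleGraph.Walk.edges_map]
  rw [List.mem_map_of_injective (Sym2.map.injective (val_injective D))]

lemma mem_support_liftWalk {D : G.Subgraph} {a b : W} {p : G.Walk a b}
    {hp : ∀ e ∈ p.edges, e ∈ D.edgeSet} {ha : a ∈ D.verts} {hb : b ∈ D.verts}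
    {x : D.verts} :
    x ∈ (liftWalk D p hp ha hb).support ↔ (x : W) ∈ p.support := by
  have key2 : ((liftWalk D p hp ha hb).map D.hom).support = p.support :=
    congrArg (fun q : G.Walk a b => q.support) (liftWalk_map D p hp ha hb)
  rw [← key2, SimpleGraph.Walk.support_map]
  exact (List.mem_map_of_injective (val_injective D)).symm

/-- push a walk in `B.coe` down to `G`; its edges lie in `B.edgeSet`. -/
lemma edges_map_hom {B : G.Subgraph} {x y : B.verts} (q : B.coe.Walk x y) :
    ∀ e ∈ (q.map B.hom).edges, e ∈ B.edgeSet := by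
  intro e he
  rw [SimpleGraph.Walk.edges_map] at he
  obtain ⟨f, hf, rfl⟩ := List.mem_map.mp he
  have := SimpleGraph.Walk.edges_subset_edgeSet q hf
  revert this
  induction f using Sym2.ind with
  | _ u v => intro hadj; exact (Subgraph.mem_edgeSet).mpr (by simpa using hadj)

end BlobAux

namespace BlobAux

lemma reachable_of_le {B T : G.Subgraph} (hBT : B ≤ T) {x y : B.verts}
    (h : B.coe.Reachable x y) : T.coe.Reachable ⟨x, hBT.1 x.2⟩ ⟨y, hBT.1 y.2⟩ := by
  obtain ⟨q⟩ := h
  exact ⟨liftWalk T (q.map B.hom)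
    (fun e he => Subgraph.edgeSet_mono hBT (edges_map_hom q e he)) _ _⟩

lemma reachable_del_of_walk {T : G.Subgraph} {ε : Sym2 T.verts} {a b : W} (p : G.Walk a b)
    (hp : ∀ e ∈ p.edges, e ∈ T.edgeSet) (ha : a ∈ T.verts) (hb : b ∈ T.verts)
    (hne : Sym2.map (⇑T.hom) ε ∉ p.edges) :
    (T.coe.deleteEdges {ε}).Reachable ⟨a, ha⟩ ⟨b, hb⟩ :=
  ⟨(liftWalk T p hp ha hb).toDeleteEdges _ (fun f hf hfε => by
      rw [Set.mem_singleton_iff] at hfε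
      subst hfε
      exact hne (mem_edges_liftWalk.mp hf))⟩

lemma reachable_del_of_le {B T : G.Subgraph} (hBT : B ≤ T)
    {εB : Sym2 B.verts} {ε : Sym2 T.verts}
    (hε : Sym2.map (⇑B.hom) εB = Sym2.map (⇑T.hom) ε)
    {x y : B.verts} (h : (B.coe.deleteEdges {εB}).Reachable x y) :
    (T.coe.deleteEdges {ε}).Reachable ⟨x, hBT.1 x.2⟩ ⟨y, hBT.1 y.2⟩ := by
  obtain ⟨q⟩ := h
  have hq : ∀ e ∈ q.edges, e ∈ B.coe.edgeSet \ {εB} := by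
    intro e he
    have := SimpleGraph.Walk.edges_subset_edgeSet q he
    rwa [SimpleGraph.edgeSet_deleteEdges] at this
  set q' := q.transfer B.coe (fun e he => (hq e he).1) with hq'def
  refine reachable_del_of_walk (q'.map B.hom)
    (fun e he => Subgraph.edgeSet_mono hBT (edges_map_hom q' e he)) (hBT.1 x.2) (hBT.1 y.2) ?_
  intro hmem
  rw [SimpleGraph.Walk.edges_map, List.mem_map] at hmem
  obtain ⟨f, hf, hfe⟩ := hmem
  rw [hq'def, SimpleGraph.Walk.edges_transfer] at hf
  rw [← hε] at hfe
  exact (hq f hf).2 (Sym2.map.injective (val_injective B) hfe)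

end BlobAux

namespace BlobAux

lemma chain_union_2ec (c : Set G.Subgraph) (hc : IsChain (· ≤ ·) c) (hne : c.Nonempty)
    (h2 : ∀ B ∈ c, TwoEdgeConnected B.coe) : TwoEdgeConnected (sSup c).coe := by
  obtain ⟨B₀, hB₀⟩ := hne
  have hn : Nonempty (sSup c).verts := by
    obtain ⟨v⟩ := (h2 B₀ hB₀).1.nonempty
    exact ⟨⟨v.1, (le_sSup hB₀).1 v.2⟩⟩
  have hub : ∀ X ∈ c, ∀ Y ∈ c, ∃ Z ∈ c, X ≤ Z ∧ Y ≤ Z := by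
    intro X hX Y hY
    rcases hc.total hX hY with h | h
    · exact ⟨Y, hY, h, le_refl _⟩
    · exact ⟨X, hX, le_refl _, h⟩
  have hmem : ∀ x : (sSup c).verts, ∃ A ∈ c, (x : W) ∈ A.verts := by
    rintro ⟨w, hw⟩
    rw [Subgraph.verts_sSup] at hw
    simpa using hw
  have hpre : (sSup c).coe.Preconnected := by
    intro x y
    obtain ⟨A, hA, hxA⟩ := hmem x
    obtain ⟨B, hB, hyB⟩ := hmem y
    obtain ⟨Z, hZ, hAZ, hBZ⟩ := hub A hA B hB
    exact reachable_of_le (le_sSup hZ) ((h2 Z hZ).1.preconnected ⟨x.1, hAZ.1 hxA⟩ ⟨y.1, hBZ.1 hyB⟩)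
  refine ⟨(connected_iff _).mpr ⟨hpre, hn⟩, ?_, ?_⟩
  · obtain ⟨e, he⟩ := (h2 B₀ hB₀).2.1
    induction e using Sym2.ind with
    | _ u v =>
      rw [SimpleGraph.mem_edgeSet, Subgraph.coe_adj] at he
      have hadj : (sSup c).Adj u.1 v.1 := (le_sSup hB₀).2 he
      exact ⟨s(⟨u.1, (sSup c).edge_vert hadj⟩, ⟨v.1, (sSup c).edge_vert hadj.symm⟩),
        by rw [SimpleGraph.mem_edgeSet, Subgraph.coe_adj]; exact hadj⟩
  · intro ε hε
    induction ε using Sym2.ind with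
    | _ u v =>
      rw [SimpleGraph.mem_edgeSet, Subgraph.coe_adj] at hε
      have he' : s(u.1, v.1) ∈ (sSup c).edgeSet := hε
      rw [Subgraph.edgeSet_sSup] at he'
      simp only [Set.mem_iUnion] at he'
      obtain ⟨A, hA, heA⟩ := he'
      have hpre' : ((sSup c).coe.deleteEdges {s(u, v)}).Preconnected := by
        intro x y
        obtain ⟨Ax, hAx, hxA⟩ := hmem x
        obtain ⟨Ay, hAy, hyA⟩ := hmem y
        obtain ⟨Z₁, hZ₁, hAZ₁, hAxZ₁⟩ := hub A hA Ax hAx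
        obtain ⟨B, hB, hZ₁B, hAyB⟩ := hub Z₁ hZ₁ Ay hAy
        have hBadj : B.Adj u.1 v.1 := (hAZ₁.trans hZ₁B).2 heA
        have hconn := (h2 B hB).2.2 s(⟨u.1, B.edge_vert hBadj⟩, ⟨v.1, B.edge_vert hBadj.symm⟩)
          (by rw [SimpleGraph.mem_edgeSet, Subgraph.coe_adj]; exact hBadj)
        have hr := hconn.preconnected ⟨x.1, (hAxZ₁.trans hZ₁B).1 hxA⟩ ⟨y.1, hAyB.1 hyA⟩
        exact reachable_del_of_le (le_sSup hB)
          (εB := s(⟨u.1, B.edge_vert hBadj⟩, ⟨v.1, B.edge_vert hBadj.symm⟩)) (ε := s(u, v)) rfl hr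
      exact (connected_iff _).mpr ⟨hpre', hn⟩

lemma exists_blob_ge (G₀ : G.Subgraph) (h2 : TwoEdgeConnected G₀.coe) :
    ∃ D : G.Subgraph, G₀ ≤ D ∧ IsBlob G D := by
  have hZ : ∀ c ⊆ {B : G.Subgraph | G₀ ≤ B ∧ TwoEdgeConnected B.coe},
      IsChain (· ≤ ·) c → ∃ ub ∈ {B : G.Subgraph | G₀ ≤ B ∧ TwoEdgeConnected B.coe},
        ∀ z ∈ c, z ≤ ub := by
    intro c hcs hchain
    rcases c.eq_empty_or_nonempty with rfl | hne
    · exact ⟨G₀, ⟨le_refl _, h2⟩, by simp⟩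
    · refine ⟨sSup c, ⟨?_, chain_union_2ec c hchain hne (fun B hB => (hcs hB).2)⟩,
        fun z hz => le_sSup hz⟩
      obtain ⟨B₀, hB₀⟩ := hne
      exact (hcs hB₀).1.trans (le_sSup hB₀)
  obtain ⟨D, hD⟩ := zorn_le₀ {B : G.Subgraph | G₀ ≤ B ∧ TwoEdgeConnected B.coe} hZ
  refine ⟨D, hD.prop.1, hD.prop.2, fun B' hle h2' => ?_⟩
  exact le_antisymm (hD.le_of_ge ⟨hD.prop.1.trans hle, h2'⟩ hle) hle

end BlobAux

end AuxB

section AuxC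
variable {V W : Type*} {H : SimpleGraph V} {G : SimpleGraph W}

namespace BlobAux

variable {V W : Type*} {H : SimpleGraph V} {G : SimpleGraph W}

/-- The union of the images of all the walks of the immersion restricted to `C`. -/
def imm (φ : Immersion H G) (C : H.Subgraph) : G.Subgraph :=
  ⨆ q : {q : V × V // C.Adj q.1 q.2}, (φ.walk (C.adj_sub q.2)).toSubgraph

lemma walk_toSubgraph_le (φ : Immersion H G) (C : H.Subgraph) {u v : V} (h : C.Adj u v)
    (hH : H.Adj u v) : (φ.walk hH).toSubgraph ≤ imm φ C := by
  have : hH = C.adj_sub h := rfl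
  subst this
  exact le_iSup (fun q : {q : V × V // C.Adj q.1 q.2} =>
    (φ.walk (C.adj_sub q.2)).toSubgraph) ⟨(u, v), h⟩

lemma walk_edges_subset (φ : Immersion H G) (C : H.Subgraph) {u v : V} (h : C.Adj u v)
    (hH : H.Adj u v) : ∀ e ∈ (φ.walk hH).edges, e ∈ (imm φ C).edgeSet := fun e he =>
  Subgraph.edgeSet_mono (walk_toSubgraph_le φ C h hH)
    ((φ.walk hH).mem_edges_toSubgraph.mpr he)

lemma walk_support_subset (φ : Immersion H G) (C : H.Subgraph) {u v : V} (h : C.Adj u v)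
    (hH : H.Adj u v) : ∀ w ∈ (φ.walk hH).support, w ∈ (imm φ C).verts := fun w hw =>
  (walk_toSubgraph_le φ C h hH).1 ((φ.walk hH).mem_verts_toSubgraph.mpr hw)

lemma mem_verts_imm {φ : Immersion H G} {C : H.Subgraph} {z : W}
    (hz : z ∈ (imm φ C).verts) :
    ∃ (u v : V) (h : C.Adj u v), z ∈ (φ.walk (C.adj_sub h)).support := by
  rw [imm, Subgraph.verts_iSup] at hz
  obtain ⟨q, hq⟩ := Set.mem_iUnion.mp hz
  exact ⟨q.1.1, q.1.2, q.2, (SimpleGraph.Walk.mem_verts_toSubgraph _).mp hq⟩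

lemma mem_edgeSet_imm {φ : Immersion H G} {C : H.Subgraph} {e : Sym2 W}
    (he : e ∈ (imm φ C).edgeSet) :
    ∃ (u v : V) (h : C.Adj u v), e ∈ (φ.walk (C.adj_sub h)).edges := by
  rw [imm, iSup, Subgraph.edgeSet_sSup] at he
  simp only [Set.mem_iUnion, Set.mem_range] at he
  obtain ⟨A, ⟨q, rfl⟩, hq⟩ := he
  exact ⟨q.1.1, q.1.2, q.2, (SimpleGraph.Walk.mem_edges_toSubgraph _).mp hq⟩


lemma coe_edgeSet_nonempty {T' : G.Subgraph} {e : Sym2 W} (he : e ∈ T'.edgeSet) :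
    T'.coe.edgeSet.Nonempty := by
  induction e using Sym2.ind with
  | _ a b =>
    refine ⟨s(⟨a, T'.edge_vert he⟩, ⟨b, T'.edge_vert (T'.adj_symm he)⟩), ?_⟩
    rw [SimpleGraph.mem_edgeSet, Subgraph.coe_adj]
    exact he

lemma imm_2ec (φ : Immersion H G) (C : H.Subgraph) (hC2 : TwoEdgeConnected C.coe) :
    TwoEdgeConnected (imm φ C).coe := by
  classical
  set T := imm φ C with hT
  have hnbr : ∀ c ∈ C.verts, ∃ d, C.Adj c d := by
    intro c hc
    obtain ⟨e₀, he₀⟩ := hC2.2.1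
    induction e₀ using Sym2.ind with
    | _ a b =>
      rw [SimpleGraph.mem_edgeSet] at he₀
      have key : ∀ (x : C.verts), C.coe.Walk x a → ∃ d, C.Adj x.1 d := by
        intro x w
        cases w with
        | nil => exact ⟨b.1, he₀⟩
        | cons h q => exact ⟨_, h⟩
      exact key ⟨c, hc⟩ (hC2.1.preconnected ⟨c, hc⟩ a).some
  have hvm : ∀ c ∈ C.verts, φ.toFun c ∈ T.verts := by
    intro c hc
    obtain ⟨d, hd⟩ := hnbr c hc
    exact walk_support_subset φ C hd (C.adj_sub hd) _
      ((φ.walk (C.adj_sub hd)).start_mem_support)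
  have reachA : ∀ (u v : V) (h : C.Adj u v) (hu : φ.toFun u ∈ T.verts)
      (hv : φ.toFun v ∈ T.verts), T.coe.Reachable ⟨φ.toFun u, hu⟩ ⟨φ.toFun v, hv⟩ :=
    fun u v h hu hv => ⟨liftWalk T (φ.walk (C.adj_sub h)) (walk_edges_subset φ C h _) hu hv⟩
  have reachB : ∀ (y x : C.verts), C.coe.Walk x y →
      ∀ (hx : φ.toFun x.1 ∈ T.verts) (hy : φ.toFun y.1 ∈ T.verts),
      T.coe.Reachable ⟨φ.toFun x.1, hx⟩ ⟨φ.toFun y.1, hy⟩ := by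
    intro y x w
    induction w with
    | nil => intro hx hy; exact Reachable.refl _
    | @cons a m b h q ih =>
      intro hx hy
      exact (reachA a.1 m.1 h hx (hvm m.1 m.2)).trans (ih (hvm m.1 m.2) hy)
  have hpre : T.coe.Preconnected := by
    intro z z'
    obtain ⟨u, v, h, hz⟩ := mem_verts_imm z.2
    obtain ⟨u', v', h', hz'⟩ := mem_verts_imm z'.2
    have r1 : T.coe.Reachable ⟨φ.toFun u, hvm u (C.edge_vert h)⟩ z :=
      ⟨liftWalk T ((φ.walk (C.adj_sub h)).takeUntil z.1 hz)
        (fun e he => walk_edges_subset φ C h _ e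
          ((φ.walk (C.adj_sub h)).edges_takeUntil_subset hz he)) (hvm u (C.edge_vert h)) z.2⟩
    have r2 : T.coe.Reachable ⟨φ.toFun u', hvm u' (C.edge_vert h')⟩ z' :=
      ⟨liftWalk T ((φ.walk (C.adj_sub h')).takeUntil z'.1 hz')
        (fun e he => walk_edges_subset φ C h' _ e
          ((φ.walk (C.adj_sub h')).edges_takeUntil_subset hz' he)) (hvm u' (C.edge_vert h')) z'.2⟩
    have rB := reachB ⟨u', C.edge_vert h'⟩ ⟨u, C.edge_vert h⟩
      (hC2.1.preconnected ⟨u, C.edge_vert h⟩ ⟨u', C.edge_vert h'⟩).some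
      (hvm u (C.edge_vert h)) (hvm u' (C.edge_vert h'))
    exact (r1.symm.trans rB).trans r2
  have hn : Nonempty T.verts := by
    obtain ⟨x⟩ := hC2.1.nonempty
    exact ⟨⟨φ.toFun x.1, hvm x.1 x.2⟩⟩
  refine ⟨(connected_iff _).mpr ⟨hpre, hn⟩, ?_, ?_⟩
  · obtain ⟨e₀, he₀⟩ := hC2.2.1
    induction e₀ using Sym2.ind with
    | _ a b =>
      rw [SimpleGraph.mem_edgeSet] at he₀
      have h' : C.Adj a.1 b.1 := he₀
      set p := φ.walk (C.adj_sub h') with hp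
      have hlen := φ.walk_nontrivial (C.adj_sub h')
      have hne : p.edges ≠ [] := by
        intro hnil
        rw [← SimpleGraph.Walk.length_edges, hnil] at hlen
        simp at hlen
      obtain ⟨e, he⟩ := List.exists_mem_of_ne_nil _ hne
      exact coe_edgeSet_nonempty (walk_edges_subset φ C h' _ e he)
  · intro ε hε
    induction ε using Sym2.ind with
    | _ zu zv =>
      rw [SimpleGraph.mem_edgeSet, Subgraph.coe_adj] at hε
      have hε' : s(zu.1, zv.1) ∈ T.edgeSet := hε
      obtain ⟨u₀, v₀, h₀, he'⟩ := mem_edgeSet_imm hε'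
      set p₀ := φ.walk (C.adj_sub h₀) with hp₀
      have hu₀C : u₀ ∈ C.verts := C.edge_vert h₀
      have hv₀C : v₀ ∈ C.verts := C.edge_vert h₀.symm
      have hbase : φ.toFun u₀ ∈ T.verts := hvm _ hu₀C
      have reachA' : ∀ (u v : V) (h : C.Adj u v), s(u, v) ≠ s(u₀, v₀) →
          ∀ hu hv, (T.coe.deleteEdges {s(zu, zv)}).Reachable ⟨φ.toFun u, hu⟩ ⟨φ.toFun v, hv⟩ := by
        intro u v h hne hu hv
        refine reachable_del_of_walk (ε := s(zu, zv)) (φ.walk (C.adj_sub h))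
          (walk_edges_subset φ C h _) hu hv ?_
        exact φ.walk_edgeDisjoint (C.adj_sub h₀) (C.adj_sub h)
          (fun hc => hne hc.symm) s(zu.1, zv.1) he'
      have reachB' : ∀ (c : C.verts) (hc : φ.toFun c.1 ∈ T.verts),
          (T.coe.deleteEdges {s(zu, zv)}).Reachable ⟨φ.toFun c.1, hc⟩ ⟨φ.toFun u₀, hbase⟩ := by
        have hmem₀ : s((⟨u₀, hu₀C⟩ : C.verts), (⟨v₀, hv₀C⟩ : C.verts)) ∈ C.coe.edgeSet := by
          rw [SimpleGraph.mem_edgeSet, Subgraph.coe_adj]; exact h₀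
        have hdel := hC2.2.2 _ hmem₀
        have key : ∀ (d c : C.verts),
            (C.coe.deleteEdges {s((⟨u₀, hu₀C⟩ : C.verts), (⟨v₀, hv₀C⟩ : C.verts))}).Walk c d →
            ∀ (hc : φ.toFun c.1 ∈ T.verts) (hd : φ.toFun d.1 ∈ T.verts),
            (T.coe.deleteEdges {s(zu, zv)}).Reachable ⟨φ.toFun c.1, hc⟩ ⟨φ.toFun d.1, hd⟩ := by
          intro d c w
          induction w with
          | nil => intro hc hd; exact Reachable.refl _
          | @cons a m b h q ih =>
            intro hc hd
            rw [SimpleGraph.deleteEdges_adj] at h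
            have hnem : s(a.1, m.1) ≠ s(u₀, v₀) := by
              intro hcc
              refine h.2 (Set.mem_singleton_iff.mpr ?_)
              apply Sym2.map.injective (Subtype.val_injective (p := (· ∈ C.verts)))
              exact hcc
            exact (reachA' a.1 m.1 h.1 hnem hc (hvm m.1 m.2)).trans (ih (hvm m.1 m.2) hd)
        intro c hc
        obtain ⟨w⟩ := hdel.preconnected c ⟨u₀, hu₀C⟩
        exact key ⟨u₀, hu₀C⟩ c w hc hbase
      have reachZ : ∀ (z : T.verts),
          (T.coe.deleteEdges {s(zu, zv)}).Reachable z ⟨φ.toFun u₀, hbase⟩ := by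
        intro z
        obtain ⟨u, v, h, hz⟩ := mem_verts_imm z.2
        by_cases hcase : s(u, v) = s(u₀, v₀)
        · have hz0 : z.1 ∈ p₀.support := by
            rcases Sym2.eq_iff.mp hcase with ⟨rfl, rfl⟩ | ⟨rfl, rfl⟩
            · exact hz
            · have hrev : φ.walk (C.adj_sub h) = p₀.reverse := φ.walk_symm (C.adj_sub h₀)
              rw [hrev] at hz
              rwa [SimpleGraph.Walk.support_reverse, List.mem_reverse] at hz
          have hnodup : p₀.edges.Nodup := (φ.walk_isPath (C.adj_sub h₀)).isTrail.edges_nodup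
          have hspec := p₀.take_spec hz0
          have hnd : ¬ (s(zu.1, zv.1) ∈ (p₀.takeUntil z.1 hz0).edges ∧
              s(zu.1, zv.1) ∈ (p₀.dropUntil z.1 hz0).edges) := by
            rw [← hspec, SimpleGraph.Walk.edges_append, List.nodup_append] at hnodup
            exact fun hh => hnodup.2.2 _ hh.1 _ hh.2 rfl
          by_cases hq1 : s(zu.1, zv.1) ∈ (p₀.takeUntil z.1 hz0).edges
          · have hq2 : s(zu.1, zv.1) ∉ (p₀.dropUntil z.1 hz0).edges := fun hh => hnd ⟨hq1, hh⟩
            have r := reachable_del_of_walk (ε := s(zu, zv)) (p₀.dropUntil z.1 hz0)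
              (fun e he => walk_edges_subset φ C h₀ _ e (p₀.edges_dropUntil_subset hz0 he))
              z.2 (hvm _ hv₀C) hq2
            exact r.trans (reachB' ⟨v₀, hv₀C⟩ _)
          · have r := reachable_del_of_walk (ε := s(zu, zv)) (p₀.takeUntil z.1 hz0)
              (fun e he => walk_edges_subset φ C h₀ _ e (p₀.edges_takeUntil_subset hz0 he))
              (hvm _ hu₀C) z.2 hq1
            exact r.symm
        · have hdisj : s(zu.1, zv.1) ∉ (φ.walk (C.adj_sub h)).edges :=
            φ.walk_edgeDisjoint (C.adj_sub h₀) (C.adj_sub h) (fun hc => hcase hc.symm) _ he'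
          have r := reachable_del_of_walk (ε := s(zu, zv))
            ((φ.walk (C.adj_sub h)).takeUntil z.1 hz)
            (fun e he => walk_edges_subset φ C h _ e
              ((φ.walk (C.adj_sub h)).edges_takeUntil_subset hz he))
            (hvm _ (C.edge_vert h)) z.2
            (fun hh => hdisj ((φ.walk (C.adj_sub h)).edges_takeUntil_subset hz hh))
          exact r.symm.trans (reachB' ⟨u, C.edge_vert h⟩ _)
      refine (connected_iff _).mpr ⟨?_, hn⟩
      intro x y
      exact (reachZ x).trans (reachZ y).symm

end BlobAux

/-- If `H` is immersed in `G` via `φ` and `C` is a blob of `H`, then there is a blob `D`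
of `G` such that the restriction of `φ` to `C` is an immersion of `C` into `D`. -/
theorem immersion_blob {V W : Type} (H : SimpleGraph V) (G : SimpleGraph W)
    (φ : Immersion H G) (C : H.Subgraph) (hC : IsBlob H C) :
    ∃ D : G.Subgraph, IsBlob G D ∧
      ∃ ψ : Immersion C.coe D.coe,
        (∀ x : C.verts, (ψ.toFun x : W) = φ.toFun (x : V)) ∧
        ∀ ⦃x y : C.verts⦄ (h : C.coe.Adj x y) (hxy : H.Adj (x : V) (y : V))
          (hx : (D.hom (ψ.toFun x) : W) = φ.toFun (x : V))
          (hy : (D.hom (ψ.toFun y) : W) = φ.toFun (y : V)),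
          ((ψ.walk h).map D.hom).copy hx hy = φ.walk hxy := by
  classical
  obtain ⟨D, hle, hblob⟩ := BlobAux.exists_blob_ge (BlobAux.imm φ C) (BlobAux.imm_2ec φ C hC.1)
  have hnbr : ∀ c ∈ C.verts, ∃ d, C.Adj c d := by
    intro c hc
    obtain ⟨e₀, he₀⟩ := hC.1.2.1
    induction e₀ using Sym2.ind with
    | _ a b =>
      rw [SimpleGraph.mem_edgeSet] at he₀
      have key : ∀ (x : C.verts), C.coe.Walk x a → ∃ d, C.Adj x.1 d := by
        intro x w
        cases w with
        | nil => exact ⟨b.1, he₀⟩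
        | cons h q => exact ⟨_, h⟩
      exact key ⟨c, hc⟩ (hC.1.1.preconnected ⟨c, hc⟩ a).some
  have hvD : ∀ c ∈ C.verts, φ.toFun c ∈ D.verts := by
    intro c hc
    obtain ⟨d, hd⟩ := hnbr c hc
    exact hle.1 (BlobAux.walk_support_subset φ C hd (C.adj_sub hd) _
      ((φ.walk (C.adj_sub hd)).start_mem_support))
  have heD : ∀ {u v : V} (h : C.Adj u v) (hH : H.Adj u v),
      ∀ e ∈ (φ.walk hH).edges, e ∈ D.edgeSet := fun h hH e he =>
    SimpleGraph.Subgraph.edgeSet_mono hle (BlobAux.walk_edges_subset φ C h hH e he)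
  refine ⟨D, hblob, ⟨{
    toFun := fun x => ⟨φ.toFun x.1, hvD x.1 x.2⟩
    injective := fun x y hxy => Subtype.ext (φ.injective (congrArg Subtype.val hxy))
    walk := fun x y h => BlobAux.liftWalk D (φ.walk (C.adj_sub h)) (heD h (C.adj_sub h))
      (hvD x.1 x.2) (hvD y.1 y.2)
    walk_isPath := fun x y h => by
      rw [← SimpleGraph.Walk.map_isPath_iff_of_injective (BlobAux.val_injective D),
        BlobAux.liftWalk_map]
      exact φ.walk_isPath (C.adj_sub h)
    walk_nontrivial := fun x y h => by
      have hl := congrArg SimpleGraph.Walk.length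
        (BlobAux.liftWalk_map D (φ.walk (C.adj_sub h)) (heD h (C.adj_sub h))
          (hvD x.1 x.2) (hvD y.1 y.2))
      rw [SimpleGraph.Walk.length_map] at hl
      rw [hl]
      exact φ.walk_nontrivial (C.adj_sub h)
    walk_symm := fun x y h => by
      apply SimpleGraph.Walk.map_injective_of_injective (BlobAux.val_injective D)
      rw [← SimpleGraph.Walk.reverse_map, BlobAux.liftWalk_map, BlobAux.liftWalk_map]
      exact φ.walk_symm (C.adj_sub h)
    walk_edgeDisjoint := fun x y x' y' h h' hne e he he' => by
      have hnev : s((x : V), (y : V)) ≠ s((x' : V), (y' : V)) := by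
        intro hc
        exact hne (Sym2.map.injective (Subtype.val_injective (p := (· ∈ C.verts))) hc)
      exact φ.walk_edgeDisjoint (C.adj_sub h) (C.adj_sub h') hnev _
        (BlobAux.mem_edges_liftWalk.mp he) (BlobAux.mem_edges_liftWalk.mp he')
    avoid := fun x y h w hwx hwy hmem => by
      have hsup : φ.toFun w.1 ∈ (φ.walk (C.adj_sub h)).support :=
        BlobAux.mem_support_liftWalk.mp hmem
      exact φ.avoid (C.adj_sub h) w.1 (fun hc => hwx (Subtype.ext hc))
        (fun hc => hwy (Subtype.ext hc)) hsup }, fun x => rfl, ?_⟩⟩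
  intro x y h hxy hx hy
  have hx' : hx = rfl := Subsingleton.elim _ _
  have hy' : hy = rfl := Subsingleton.elim _ _
  subst hx' hy'
  exact BlobAux.liftWalk_map D (φ.walk (C.adj_sub h)) (heD h (C.adj_sub h))
    (hvD x.1 x.2) (hvD y.1 y.2)
end AuxC
end

section
/- Let 𝓗 be an infinite set of pairwise vertex-disjoint infinite 2-edge-connected graphs that forms an antichain with respect to the immersion relation, and suppose the vertex set of each member H of 𝓗 has cardinality at most the cardinality of 𝓗. Then there is a connected graph G such that the set of blobs of G is exactly 𝓗 and G admits no self-immersion except the trivial one (the identity). -/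
open SimpleGraph

namespace Rigid

def lvlOf {ι : Type} (E : ι ≃ Option (ℕ × ι)) (j : ι) : ℕ :=
  (E j).elim 0 (fun p => p.1 + 1)

structure Setup (U ι : Type) where
  s : ι → Set U
  Gr : ∀ i, SimpleGraph ↥(s i)
  disj : ∀ i j, i ≠ j → Disjoint (s i) (s j)
  conn : ∀ i, (Gr i).Connected
  edgeNE : ∀ i, (Gr i).edgeSet.Nonempty
  del : ∀ i, ∀ e ∈ (Gr i).edgeSet, ((Gr i).deleteEdges {e}).Connected
  anti : ∀ i j, i ≠ j → ¬ Immersed (Gr i) (Gr j)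
  E : ι ≃ Option (ℕ × ι)
  att : ∀ i, ↥(s i)
  π : ℕ → ι → Σ i, ↥(s i)
  π_lvl : ∀ n x, lvlOf E (π n x).1 = n
  π_surj : ∀ w : Σ i, ↥(s i), ∃ x, π (lvlOf E w.1) x = w

namespace Setup

variable {U ι : Type} (S : Setup U ι)

abbrev W := Σ i, ↥(S.s i)

def lvl (j : ι) : ℕ := lvlOf S.E j

def r : ι := S.E.symm none

lemma E_r : S.E S.r = none := S.E.apply_symm_apply none

lemma eq_r_iff {j : ι} : j = S.r ↔ S.E j = none := by
  constructor
  · rintro rfl; exact S.E_r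
  · intro h; have := congrArg S.E.symm h
    rw [Equiv.symm_apply_apply] at this; exact this

lemma lvl_r : S.lvl S.r = 0 := by simp [lvl, lvlOf, S.E_r]

def pv (j : ι) : S.W :=
  (S.E j).elim ⟨S.r, S.att S.r⟩ (fun p => S.π p.1 p.2)

def anc (j : ι) : ι := (S.pv j).1

lemma pv_eq {j : ι} {n : ℕ} {x : ι} (h : S.E j = some (n, x)) : S.pv j = S.π n x := by
  simp [pv, h]

lemma exists_some_of_ne_r {j : ι} (h : j ≠ S.r) : ∃ n x, S.E j = some (n, x) := by
  rcases hE : S.E j with _ | p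
  · exact absurd (S.eq_r_iff.2 hE) h
  · exact ⟨p.1, p.2, by simp⟩

lemma lvl_eq_of_E {j : ι} {n : ℕ} {x : ι} (h : S.E j = some (n, x)) : S.lvl j = n + 1 := by
  simp [lvl, lvlOf, h]

lemma lvl_anc {j : ι} (h : j ≠ S.r) : S.lvl (S.anc j) + 1 = S.lvl j := by
  obtain ⟨n, x, hE⟩ := S.exists_some_of_ne_r h
  rw [S.lvl_eq_of_E hE]
  have : S.anc j = (S.π n x).1 := by rw [anc, S.pv_eq hE]
  rw [this]
  exact congrArg (· + 1) (S.π_lvl n x)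

lemma anc_r : S.anc S.r = S.r := by simp [anc, pv, S.E_r]

lemma lvl_anc_le (j : ι) : S.lvl (S.anc j) ≤ S.lvl j := by
  by_cases h : j = S.r
  · subst h; rw [S.anc_r]
  · have := S.lvl_anc h; omega

lemma lvl_anc_lt {j : ι} (h : j ≠ S.r) : S.lvl (S.anc j) < S.lvl j := by
  have := S.lvl_anc h; omega

lemma lvl_anc_iter_le (m : ℕ) (j : ι) : S.lvl (S.anc^[m] j) ≤ S.lvl j := by
  induction m with
  | zero => simp
  | succ m ih =>
      rw [Function.iterate_succ_apply']
      exact le_trans (S.lvl_anc_le _) ih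

lemma no_anc_cycle {j : ι} (h : j ≠ S.r) (m : ℕ) : S.anc^[m] (S.anc j) ≠ j := by
  intro hc
  have h1 : S.lvl (S.anc^[m] (S.anc j)) ≤ S.lvl (S.anc j) := S.lvl_anc_iter_le m _
  have h2 : S.lvl (S.anc j) < S.lvl j := S.lvl_anc_lt h
  rw [hc] at h1; omega

lemma anc_iter_r (m : ℕ) : S.anc^[m] S.r = S.r := by
  induction m with
  | zero => rfl
  | succ m ih => rw [Function.iterate_succ_apply', ih, S.anc_r]

/-- the subtree (descendant) relation: `k` lies in the subtree rooted at `j`. -/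
def InSub (j k : ι) : Prop := ∃ m, S.anc^[m] k = j

lemma InSub_self (j : ι) : S.InSub j j := ⟨0, rfl⟩

lemma not_InSub_r {j : ι} (h : j ≠ S.r) : ¬ S.InSub j S.r := by
  rintro ⟨m, hm⟩
  exact h (by rw [S.anc_iter_r m] at hm; exact hm.symm)

lemma InSub_anc_iff {j k : ι} (hkj : k ≠ j) : S.InSub j k ↔ S.InSub j (S.anc k) := by
  constructor
  · rintro ⟨m, hm⟩
    cases m with
    | zero => exact absurd hm hkj
    | succ m => exact ⟨m, by rwa [Function.iterate_succ_apply] at hm⟩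
  · rintro ⟨m, hm⟩
    exact ⟨m + 1, by rwa [Function.iterate_succ_apply]⟩

lemma not_InSub_anc {j : ι} (h : j ≠ S.r) : ¬ S.InSub j (S.anc j) := by
  rintro ⟨m, hm⟩
  exact S.no_anc_cycle h m hm

/-- `R i x y`: `x` and `y` are adjacent within the blob `i`. -/
def R (i : ι) (x y : U) : Prop :=
  ∃ (hx : x ∈ S.s i) (hy : y ∈ S.s i), (S.Gr i).Adj ⟨x, hx⟩ ⟨y, hy⟩

lemma R.symm {i : ι} {x y : U} (h : S.R i x y) : S.R i y x := by
  obtain ⟨hx, hy, h⟩ := h; exact ⟨hy, hx, h.symm⟩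

lemma R_congr {i i' : ι} (h : i = i') {x y : U} (hR : S.R i x y) : S.R i' x y := h ▸ hR

def BlobAdj (a b : S.W) : Prop := a.1 = b.1 ∧ S.R a.1 a.2.val b.2.val

def childV (j : ι) : S.W := ⟨j, S.att j⟩

def Br (a b : S.W) : Prop :=
  ∃ j, j ≠ S.r ∧ ((a = S.pv j ∧ b = S.childV j) ∨ (b = S.pv j ∧ a = S.childV j))

lemma lvl_childV (j : ι) : S.lvl (S.childV j).1 = S.lvl j := rfl

lemma pv_ne_childV {j : ι} (h : j ≠ S.r) : (S.pv j).1 ≠ j := by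
  intro hc
  have := S.lvl_anc h
  rw [anc] at this
  rw [hc] at this
  omega

lemma Br.ne_fst {a b : S.W} (h : S.Br a b) : a.1 ≠ b.1 := by
  obtain ⟨j, hj, (⟨ha, hb⟩ | ⟨hb, ha⟩)⟩ := h
  · rw [ha, hb]; exact S.pv_ne_childV hj
  · rw [ha, hb]; exact fun hc => S.pv_ne_childV hj hc.symm

lemma Br.symm {a b : S.W} (h : S.Br a b) : S.Br b a := by
  obtain ⟨j, hj, h⟩ := h; exact ⟨j, hj, h.symm⟩

def G : SimpleGraph S.W where
  Adj a b := S.BlobAdj a b ∨ S.Br a b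
  symm := by
    constructor
    rintro a b (⟨h1, h2⟩ | h)
    · exact Or.inl ⟨h1.symm, S.R_congr h1 h2.symm⟩
    · exact Or.inr h.symm
  loopless := by
    constructor
    rintro a (⟨h1, h2⟩ | h)
    · obtain ⟨hx, hy, h⟩ := h2
      exact (S.Gr a.1).loopless.irrefl _ (by convert h using 2 <;> exact (Subtype.ext rfl))
    · exact absurd rfl (Setup.Br.ne_fst S h)


/-! ### casting between blob vertices and `W` -/

def vv (z : S.W) : U := z.2.val

lemma vv_injective : Function.Injective S.vv := by
  rintro ⟨i, u⟩ ⟨i', u'⟩ h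
  by_cases hii : i = i'
  · subst hii
    exact congrArg _ (Subtype.ext h)
  · exfalso
    have hu : (u : U) ∈ S.s i' := by
      rw [show (u : U) = (u' : U) from h]
      exact u'.2
    exact Set.disjoint_left.1 (S.disj i i' hii) u.2 hu

def castv (z : S.W) {j : ι} (hz : z.1 = j) : ↥(S.s j) := ⟨z.2.val, hz ▸ z.2.2⟩

lemma eq_mk (z : S.W) {j : ι} (hz : z.1 = j) : z = ⟨j, S.castv z hz⟩ := by
  rcases z with ⟨i, u⟩
  subst hz
  rfl

/-- the embedding of the blob `Gr j` into `G`. -/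
def emb (j : ι) : S.Gr j →g S.G where
  toFun u := ⟨j, u⟩
  map_rel' := fun {a b} h => Or.inl ⟨rfl, ⟨a.2, b.2, h⟩⟩

lemma emb_injective (j : ι) : Function.Injective (S.emb j) := by
  rintro a b h
  have := (Sigma.mk.inj_iff.1 h).2
  exact Subtype.ext (congrArg Subtype.val (eq_of_heq this))

lemma adj_down {j : ι} {a b : ↥(S.s j)} (h : S.G.Adj ⟨j, a⟩ ⟨j, b⟩) : (S.Gr j).Adj a b := by
  rcases h with ⟨_, hR⟩ | hBr
  · obtain ⟨ha, hb, hadj⟩ := hR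
    exact hadj
  · exact ((Setup.Br.ne_fst S hBr) rfl).elim

/-- every walk of `G` inside the blob `j` comes from a walk of `Gr j`. -/
lemma blobwalk_pre {j : ι} {x y : S.W} (p : S.G.Walk x y) :
    ∀ (hs : ∀ z ∈ p.support, z.1 = j) (u v : ↥(S.s j)) (hu : x = ⟨j, u⟩) (hv : y = ⟨j, v⟩),
      ∃ q : (S.Gr j).Walk u v, p.copy hu hv = q.map (S.emb j) := by
  induction p with
  | nil =>
      rintro hs u v hu hv
      subst hu
      have huv : u = v := by
        have := (Sigma.mk.inj_iff.1 hv).2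
        exact Subtype.ext (congrArg Subtype.val (eq_of_heq this))
      subst huv
      exact ⟨Walk.nil, rfl⟩
  | @cons x z y h t ih =>
      rintro hs u v hu hv
      subst hu; subst hv
      have hz : z.1 = j := hs z (by
        rw [Walk.support_cons]
        exact List.mem_cons_of_mem _ t.start_mem_support)
      obtain ⟨w, hw⟩ : ∃ w : ↥(S.s j), z = ⟨j, w⟩ := ⟨_, S.eq_mk z hz⟩
      subst hw
      have h' : (S.Gr j).Adj u w := S.adj_down h
      obtain ⟨q', hq'⟩ := ih (fun a ha => hs a (by rw [Walk.support_cons]; exact List.mem_cons_of_mem _ ha)) w v rfl rfl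
      rw [Walk.copy_rfl_rfl] at hq'
      refine ⟨Walk.cons h' q', ?_⟩
      rw [Walk.copy_rfl_rfl, Walk.map_cons]
      exact congrArg _ hq'

/-! ### sides of bridges -/

def D (j : ι) : Set S.W := {w | S.InSub j w.1}

def bedge (j : ι) : Sym2 S.W := s(S.pv j, S.childV j)

lemma childV_mem_D (j : ι) : S.childV j ∈ S.D j := S.InSub_self j

lemma pv_not_mem_D {j : ι} (hj : j ≠ S.r) : S.pv j ∉ S.D j := S.not_InSub_anc hj

lemma D_of_fst {j : ι} {a b : S.W} (h : a.1 = b.1) : a ∈ S.D j ↔ b ∈ S.D j := by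
  show S.InSub j a.1 ↔ S.InSub j b.1
  rw [h]

/-- the only edge of `G` crossing the boundary of `D j` is the bridge of `j`. -/
lemma adj_cross {a b : S.W} (h : S.G.Adj a b) {j : ι} (hj : j ≠ S.r)
    (hcross : ¬ (a ∈ S.D j ↔ b ∈ S.D j)) : s(a, b) = S.bedge j := by
  rcases h with ⟨h1, _⟩ | ⟨j₀, hj₀, hcase⟩
  · exact absurd (S.D_of_fst h1) hcross
  · by_cases hjj : j₀ = j
    · subst hjj
      rcases hcase with ⟨ha, hb⟩ | ⟨hb, ha⟩
      · rw [ha, hb]; rfl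
      · rw [ha, hb]; exact Sym2.eq_swap
    · exfalso
      apply hcross
      have key : ∀ c d : S.W, c = S.pv j₀ → d = S.childV j₀ → (c ∈ S.D j ↔ d ∈ S.D j) := by
        intro c d hc hd
        have h1 : (c ∈ S.D j) ↔ S.InSub j (S.anc j₀) := by rw [hc]; exact Iff.rfl
        have h2 : (d ∈ S.D j) ↔ S.InSub j j₀ := by rw [hd]; exact Iff.rfl
        rw [h1, h2]
        exact (S.InSub_anc_iff hjj).symm
      rcases hcase with ⟨ha, hb⟩ | ⟨hb, ha⟩
      · exact key a b ha hb
      · exact (key b a hb ha).symm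

/-- a walk avoiding the bridge of `j` stays on one side of it. -/
lemma walk_same_side {j : ι} (hj : j ≠ S.r) {x y : S.W} (p : S.G.Walk x y)
    (he : S.bedge j ∉ p.edges) : x ∈ S.D j ↔ y ∈ S.D j := by
  induction p with
  | nil => exact Iff.rfl
  | @cons x z y h t ih =>
      rw [Walk.edges_cons] at he
      have h1 : s(x, z) ≠ S.bedge j := fun hc => he (by rw [← hc]; exact List.mem_cons_self)
      have h2 : S.bedge j ∉ t.edges := fun hc => he (List.mem_cons_of_mem _ hc)
      have step : x ∈ S.D j ↔ z ∈ S.D j := by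
        by_contra hc
        exact h1 (S.adj_cross h hj hc)
      exact step.trans (ih h2)

/-- a trail using the bridge of `j` switches sides. -/
lemma walk_opp_side {j : ι} (hj : j ≠ S.r) {x y : S.W} (p : S.G.Walk x y)
    (hnd : p.edges.Nodup) (he : S.bedge j ∈ p.edges) : ¬ (x ∈ S.D j ↔ y ∈ S.D j) := by
  induction p with
  | nil => simp at he
  | @cons x z y h t ih =>
      rw [Walk.edges_cons] at he hnd
      by_cases h1 : s(x, z) = S.bedge j
      · have h2 : S.bedge j ∉ t.edges := by
          rw [← h1]
          exact (List.nodup_cons.1 hnd).1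
        have hxz : ¬ (x ∈ S.D j ↔ z ∈ S.D j) := by
          have : (x = S.pv j ∧ z = S.childV j) ∨ (x = S.childV j ∧ z = S.pv j) := by
            rw [bedge, Sym2.eq_iff] at h1
            tauto
          rcases this with ⟨hx, hz⟩ | ⟨hx, hz⟩
          · rw [hx, hz]
            intro hc
            exact S.pv_not_mem_D hj (hc.2 (S.childV_mem_D j))
          · rw [hx, hz]
            intro hc
            exact S.pv_not_mem_D hj (hc.1 (S.childV_mem_D j))
        have hzy : z ∈ S.D j ↔ y ∈ S.D j := S.walk_same_side hj t h2
        intro hc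
        exact hxz (hc.trans hzy.symm)
      · have h2 : S.bedge j ∈ t.edges := by
          rcases List.mem_cons.1 he with hc | hc
          · exact absurd hc.symm h1
          · exact hc
        have step : x ∈ S.D j ↔ z ∈ S.D j := by
          by_contra hc
          exact h1 (S.adj_cross h hj hc)
        intro hc
        exact ih (List.nodup_cons.1 hnd).2 h2 (step.symm.trans hc)


/-! ### bridges as edges -/

lemma br_edge {a b : S.W} (h : S.Br a b) : ∃ j, j ≠ S.r ∧ s(a, b) = S.bedge j := by
  obtain ⟨j, hj, (⟨ha, hb⟩ | ⟨hb, ha⟩)⟩ := h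
  · exact ⟨j, hj, by rw [ha, hb]; rfl⟩
  · exact ⟨j, hj, by rw [ha, hb]; exact Sym2.eq_swap⟩

lemma blobAdj_not_br {a b : S.W} (h : S.BlobAdj a b) : ¬ S.Br a b :=
  fun hc => (Setup.Br.ne_fst S hc) h.1

lemma bedge_adj {j : ι} (hj : j ≠ S.r) : S.G.Adj (S.pv j) (S.childV j) :=
  Or.inr ⟨j, hj, Or.inl ⟨rfl, rfl⟩⟩

lemma blobAdj_ne_bedge {a b : S.W} (h : S.BlobAdj a b) {j : ι} (hj : j ≠ S.r) :
    s(a, b) ≠ S.bedge j := by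
  intro hc
  rw [bedge, Sym2.eq_iff] at hc
  have hne : (S.pv j).1 ≠ (S.childV j).1 := S.pv_ne_childV hj
  rcases hc with ⟨ha, hb⟩ | ⟨ha, hb⟩
  · exact hne (by rw [← ha, ← hb]; exact h.1)
  · exact hne (by rw [← hb, ← ha]; exact h.1.symm)

/-- if a walk uses no bridge, its support stays in one blob. -/
lemma support_const {x y : S.W} (p : S.G.Walk x y)
    (hnb : ∀ e ∈ p.edges, ∀ j, j ≠ S.r → e ≠ S.bedge j) :
    ∀ z ∈ p.support, z.1 = x.1 := by
  induction p with
  | nil =>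
      intro z hz
      rw [Walk.support_nil, List.mem_singleton] at hz
      rw [hz]
  | @cons x z0 y h t ih =>
      intro z hz
      have hblob : S.BlobAdj x z0 := by
        rcases h with hb | hbr
        · exact hb
        · obtain ⟨j, hj, hedge⟩ := S.br_edge hbr
          exact absurd hedge (hnb _ (by exact List.mem_cons_self) j hj)
      rw [Walk.support_cons] at hz
      rcases List.mem_cons.1 hz with rfl | hz
      · rfl
      · have := ih (fun e he j hj => hnb e (by rw [Walk.edges_cons]; exact List.mem_cons_of_mem _ he) j hj) z hz
        rw [this, hblob.1]

/-! ### the blob subgraphs -/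

def Bl (i : ι) : S.G.Subgraph where
  verts := {w : S.W | w.1 = i}
  Adj a b := a.1 = i ∧ b.1 = i ∧ S.R i a.2.val b.2.val
  adj_sub := by rintro a b ⟨ha, hb, hR⟩; exact Or.inl ⟨ha.trans hb.symm, S.R_congr ha.symm hR⟩
  edge_vert := by rintro a b ⟨ha, _, _⟩; exact ha
  symm := by constructor; rintro a b ⟨ha, hb, hR⟩; exact ⟨hb, ha, hR.symm⟩

lemma childV_mem_Bl (i : ι) : S.childV i ∈ (S.Bl i).verts := rfl

def blIso (i : ι) : (S.Bl i).coe ≃g S.Gr i where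
  toFun w := S.castv w.1 w.2
  invFun u := ⟨⟨i, u⟩, rfl⟩
  left_inv := by rintro ⟨w, hw⟩; exact Subtype.ext (S.eq_mk w hw).symm
  right_inv := by intro u; rfl
  map_rel_iff' := by
    rintro ⟨a, ha⟩ ⟨b, hb⟩
    constructor
    · rintro h
      exact ⟨ha, hb, ha ▸ a.2.2, hb ▸ b.2.2, h⟩
    · rintro ⟨_, _, hx, hy, hadj⟩
      exact hadj

/-! ### transporting 2-edge-connectivity along isos -/

end Setup

def isoDeleteEdges {V V' : Type*} {A : SimpleGraph V} {A' : SimpleGraph V'} (e : A ≃g A')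
    (E' : Set (Sym2 V')) : (A.deleteEdges (Sym2.map e ⁻¹' E')) ≃g (A'.deleteEdges E') where
  toEquiv := e.toEquiv
  map_rel_iff' := by
    intro a b
    simp only [deleteEdges_adj, Set.mem_preimage, Sym2.map_pair_eq]
    rw [show e.toEquiv a = e a from rfl, show e.toEquiv b = e b from rfl, e.map_rel_iff]

lemma twoEdgeConnected_of_iso {V V' : Type*} {A : SimpleGraph V} {A' : SimpleGraph V'}
    (e : A ≃g A') (h : TwoEdgeConnected A) : TwoEdgeConnected A' := by
  obtain ⟨hc, hne, hdel⟩ := h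
  refine ⟨e.connected_iff.1 hc, ?_, ?_⟩
  · obtain ⟨ed, hed⟩ := hne
    exact ⟨_, (e.mapEdgeSet ⟨ed, hed⟩).2⟩
  · intro e' he'
    have h0 : (Sym2.map ⇑e ⁻¹' {e'}).Nonempty := by
      refine ⟨Sym2.map ⇑e.symm e', ?_⟩
      simp only [Set.mem_preimage, Sym2.map_map, Set.mem_singleton_iff]
      have : (⇑e ∘ ⇑e.symm) = id := by
        funext z
        exact e.toEquiv.apply_symm_apply z
      rw [this, Sym2.map_id, id]
    obtain ⟨e₀, he₀⟩ := h0
    have he₀' : Sym2.map ⇑e e₀ = e' := he₀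
    have hmem : e₀ ∈ A.edgeSet := by
      clear he₀
      revert he₀'
      induction e₀ using Sym2.ind with
      | _ a b =>
          intro he₀'
          rw [Sym2.map_pair_eq] at he₀'
          rw [← he₀'] at he'
          exact e.map_rel_iff.1 he'
    have hsingle : (Sym2.map ⇑e ⁻¹' {e'}) = {e₀} := by
      ext z
      simp only [Set.mem_preimage, Set.mem_singleton_iff]
      constructor
      · intro hz
        have : Sym2.map ⇑e.symm (Sym2.map ⇑e z) = Sym2.map ⇑e.symm (Sym2.map ⇑e e₀) := by
          rw [hz, he₀']
        have hid : ∀ w : Sym2 V, Sym2.map ⇑e.symm (Sym2.map ⇑e w) = w := by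
          intro w
          rw [Sym2.map_map]
          have : (⇑e.symm ∘ ⇑e) = id := by
            funext u
            exact e.toEquiv.symm_apply_apply u
          rw [this, Sym2.map_id, id]
        rw [hid, hid] at this
        exact this
      · rintro rfl
        exact he₀'
    have hdel0 := hdel e₀ hmem
    have hiso := isoDeleteEdges e {e'}
    rw [hsingle] at hiso
    exact hiso.connected_iff.1 hdel0

namespace Setup

variable {U ι : Type} (S : Setup U ι)

lemma bl_2EC (i : ι) : TwoEdgeConnected (S.Bl i).coe :=
  twoEdgeConnected_of_iso (S.blIso i).symm ⟨S.conn i, S.edgeNE i, S.del i⟩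

/-! ### 2-edge-connected subgraphs avoid bridges -/

lemma no_bridge_of_2EC {H' : S.G.Subgraph} (h2 : TwoEdgeConnected H'.coe)
    {a b : S.W} (hab : H'.Adj a b) : S.BlobAdj a b := by
  rcases H'.adj_sub hab with hblob | hbr
  · exact hblob
  exfalso
  obtain ⟨j, hj, hcases⟩ := hbr
  have hedge : s(a, b) = S.bedge j := by
    rcases hcases with ⟨ha', hb'⟩ | ⟨hb', ha'⟩
    · rw [ha', hb']; rfl
    · rw [ha', hb']; exact Sym2.eq_swap
  have ha : a ∈ H'.verts := H'.edge_vert hab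
  have hb : b ∈ H'.verts := H'.edge_vert hab.symm
  have hcoe : H'.coe.Adj ⟨a, ha⟩ ⟨b, hb⟩ := hab
  have hedel := h2.2.2 s(⟨a, ha⟩, ⟨b, hb⟩) hcoe
  obtain ⟨p'⟩ := hedel.preconnected ⟨a, ha⟩ ⟨b, hb⟩
  let f : (H'.coe.deleteEdges {s((⟨a, ha⟩ : H'.verts), ⟨b, hb⟩)}) →g S.G :=
    H'.hom.comp (SimpleGraph.Hom.ofLE (deleteEdges_le _))
  have hfinj : Function.Injective f := fun x y hxy => Subtype.ext hxy
  have hnb : S.bedge j ∉ (p'.map f).edges := by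
    intro hmem
    rw [Walk.edges_map] at hmem
    obtain ⟨ed, hed, hfe⟩ := List.mem_map.1 hmem
    have hed' := p'.edges_subset_edgeSet hed
    rw [edgeSet_deleteEdges] at hed'
    apply hed'.2
    rw [Set.mem_singleton_iff]
    have h1 : Sym2.map ⇑f s((⟨a, ha⟩ : H'.verts), ⟨b, hb⟩) = S.bedge j := by
      rw [Sym2.map_pair_eq]
      exact hedge
    exact (Function.Embedding.sym2Map ⟨⇑f, hfinj⟩).injective (hfe.trans h1.symm)
  have hsideab : (a ∈ S.D j ↔ b ∈ S.D j) := S.walk_same_side hj (p'.map f) hnb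
  rcases hcases with ⟨ha', hb'⟩ | ⟨hb', ha'⟩
  · apply S.pv_not_mem_D hj
    rw [← ha']
    apply hsideab.2
    rw [hb']
    exact S.childV_mem_D j
  · apply S.pv_not_mem_D hj
    rw [← hb']
    apply hsideab.1
    rw [ha']
    exact S.childV_mem_D j

/-- any two vertices of a 2-edge-connected subgraph lie in the same blob. -/
lemma verts_blob_of_2EC {H' : S.G.Subgraph} (h2 : TwoEdgeConnected H'.coe)
    {w₀ : S.W} (hw₀ : w₀ ∈ H'.verts) {w : S.W} (hw : w ∈ H'.verts) : w.1 = w₀.1 := by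
  obtain ⟨p'⟩ := h2.1.preconnected ⟨w₀, hw₀⟩ ⟨w, hw⟩
  have hnb : ∀ e ∈ (p'.map H'.hom).edges, ∀ j, j ≠ S.r → e ≠ S.bedge j := by
    intro e he j hj
    rw [Walk.edges_map] at he
    obtain ⟨ed, hed, rfl⟩ := List.mem_map.1 he
    have hed' := p'.edges_subset_edgeSet hed
    clear he hed
    revert hed'
    induction ed using Sym2.ind with
    | _ x y =>
        intro hed'
        have hadj : H'.Adj x.val y.val := hed'
        have hba := S.no_bridge_of_2EC h2 hadj
        rw [Sym2.map_pair_eq]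
        exact S.blobAdj_ne_bedge hba hj
  exact S.support_const (p'.map H'.hom) hnb w (p'.map H'.hom).end_mem_support

/-! ### the blobs of `G` are exactly the `Bl i` -/

lemma bl_isBlob (i : ι) : IsBlob S.G (S.Bl i) := by
  refine ⟨S.bl_2EC i, ?_⟩
  intro B' hle h2
  have hsub : ∀ w ∈ B'.verts, w.1 = i :=
    fun w hw => S.verts_blob_of_2EC h2 (hle.1 (S.childV_mem_Bl i)) hw
  have hverts : B'.verts = (S.Bl i).verts := by
    ext w
    exact ⟨fun hw => hsub w hw, fun hw => hle.1 hw⟩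
  refine Subgraph.ext hverts ?_
  funext a b
  apply propext
  constructor
  · intro h
    have hba := S.no_bridge_of_2EC h2 h
    have ha : a.1 = i := hsub a (B'.edge_vert h)
    have hb : b.1 = i := hsub b (B'.edge_vert h.symm)
    exact ⟨ha, hb, S.R_congr ha hba.2⟩
  · intro h
    exact hle.2 h

lemma blob_surj (D' : S.G.Subgraph) (hD : IsBlob S.G D') : ∃ i, S.Bl i = D' := by
  have h2 := hD.1
  obtain ⟨w₀, hw₀⟩ : D'.verts.Nonempty := by
    obtain ⟨⟨w₀, hw₀⟩⟩ := h2.1.nonempty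
    exact ⟨w₀, hw₀⟩
  refine ⟨w₀.1, hD.2 (S.Bl w₀.1) ?_ (S.bl_2EC w₀.1)⟩
  constructor
  · intro w hw
    exact S.verts_blob_of_2EC h2 hw₀ hw
  · intro a b h
    have hba := S.no_bridge_of_2EC h2 h
    have ha : a.1 = w₀.1 := S.verts_blob_of_2EC h2 hw₀ (D'.edge_vert h)
    have hb : b.1 = w₀.1 := S.verts_blob_of_2EC h2 hw₀ (D'.edge_vert h.symm)
    exact ⟨ha, hb, S.R_congr ha hba.2⟩

lemma bl_injective : Function.Injective S.Bl := by
  intro i k h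
  have : S.childV i ∈ (S.Bl k).verts := by rw [← h]; exact S.childV_mem_Bl i
  exact this

/-! ### connectivity of `G` -/

lemma reach_att (w : S.W) : S.G.Reachable w ⟨w.1, S.att w.1⟩ :=
  Reachable.map (S.emb w.1) ((S.conn w.1).preconnected w.2 (S.att w.1))

lemma lvl_eq_zero {j : ι} (h : S.lvl j = 0) : j = S.r := by
  rcases hE : S.E j with _ | p
  · exact S.eq_r_iff.2 hE
  · have := S.lvl_eq_of_E (show S.E j = some (p.1, p.2) by rw [hE])
    omega

lemma g_connected : S.G.Connected := by
  rw [connected_iff]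
  refine ⟨?_, ⟨S.childV S.r⟩⟩
  have key : ∀ n (w : S.W), S.lvl w.1 ≤ n → S.G.Reachable w (S.childV S.r) := by
    intro n
    induction n with
    | zero =>
        intro w hw
        have hr : w.1 = S.r := S.lvl_eq_zero (Nat.le_zero.1 hw)
        exact (congrArg S.childV hr) ▸ (S.reach_att w)
    | succ n ih =>
        intro w hw
        by_cases hr : w.1 = S.r
        · exact (congrArg S.childV hr) ▸ (S.reach_att w)
        · have h1 := S.reach_att w
          have h2 : S.G.Adj (S.childV w.1) (S.pv w.1) := (S.bedge_adj hr).symm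
          have h3 : S.lvl (S.pv w.1).1 ≤ n := by
            have := S.lvl_anc hr
            rw [anc] at this
            omega
          exact h1.trans (h2.reachable.trans (ih _ h3))
  intro a b
  exact (key _ a le_rfl).trans (key _ b le_rfl).symm


/-! ### rigidity -/

lemma iterate_fix_r {l : ι} (hl : l ≠ S.r) {p : ℕ} (hp : 0 < p) : S.anc^[p] l ≠ l := by
  cases p with
  | zero => omega
  | succ q =>
      intro hc
      rw [Function.iterate_succ_apply] at hc
      exact S.no_anc_cycle hl q hc

lemma sep_exists {k l : ι} (hkl : k ≠ l) :
    ∃ j, j ≠ S.r ∧ ¬ (S.InSub j k ↔ S.InSub j l) := by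
  by_cases hk : k = S.r
  · subst hk
    refine ⟨l, fun hc => hkl hc.symm, fun hc => ?_⟩
    exact S.not_InSub_r (fun hc2 => hkl hc2.symm) (hc.2 (S.InSub_self l))
  · by_cases hIk : S.InSub k l
    · have hl : l ≠ S.r := by
        rintro rfl
        exact S.not_InSub_r hk hIk
      refine ⟨l, hl, fun hc => ?_⟩
      have hIl : S.InSub l k := hc.2 (S.InSub_self l)
      obtain ⟨m, hm⟩ := hIk
      obtain ⟨m', hm'⟩ := hIl
      have hsum : S.anc^[m' + m] l = l := by
        rw [Function.iterate_add_apply, hm, hm']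
      have hpos : 0 < m' + m := by
        rcases Nat.eq_zero_or_pos (m' + m) with h0 | h0
        · exfalso
          have hm0 : m = 0 := by omega
          rw [hm0] at hm
          exact hkl hm.symm
        · exact h0
      exact S.iterate_fix_r hl hpos hsum
    · exact ⟨k, hk, fun hc => hIk (hc.1 (S.InSub_self k))⟩

end Setup

/-- along any walk with endpoints on opposite sides of `Q` there is a flipping edge. -/
lemma walk_flip {V' : Type*} {A : SimpleGraph V'} (Q : V' → Prop) :
    ∀ {u v : V'} (p : A.Walk u v), ¬ (Q u ↔ Q v) → ∃ a b, A.Adj a b ∧ ¬ (Q a ↔ Q b) := by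
  intro u v p
  induction p with
  | nil => intro h; exact absurd Iff.rfl h
  | @cons u z v h t ih =>
      intro hq
      by_cases hz : Q u ↔ Q z
      · obtain ⟨a, b, hab, hfl⟩ := ih (fun hc => hq (hz.trans hc))
        exact ⟨a, b, hab, hfl⟩
      · exact ⟨u, z, h, hz⟩

/-- same, for a walk in `deleteEdges` with the flipping edge distinct from the deleted one. -/
lemma walk_flip_del {V' : Type*} {A : SimpleGraph V'} (Q : V' → Prop) {E' : Set (Sym2 V')}
    {u v : V'} (p : (A.deleteEdges E').Walk u v) (hq : ¬ (Q u ↔ Q v)) :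
    ∃ a b, A.Adj a b ∧ s(a, b) ∉ E' ∧ ¬ (Q a ↔ Q b) := by
  obtain ⟨a, b, hab, hfl⟩ := walk_flip Q p hq
  rw [deleteEdges_adj] at hab
  exact ⟨a, b, hab.1, hab.2, hfl⟩

namespace Setup

variable {U ι : Type} (S : Setup U ι)

lemma sym2_mk_ne {i : ι} {a b c d : ↥(S.s i)} (h : s(a, b) ≠ s(c, d)) :
    s((⟨i, a⟩ : S.W), ⟨i, b⟩) ≠ s((⟨i, c⟩ : S.W), ⟨i, d⟩) := by
  intro hc
  apply h
  have := (Function.Embedding.sym2Map ⟨fun u : ↥(S.s i) => (⟨i, u⟩ : S.W), S.emb_injective i⟩).injective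
  apply this
  show Sym2.map _ s(a, b) = Sym2.map _ s(c, d)
  rw [Sym2.map_pair_eq, Sym2.map_pair_eq]
  exact hc

/-- an immersion maps blobs into blobs. -/
lemma img_same_blob (φ : Immersion S.G S.G) {x y : S.W} (hxy : x.1 = y.1) :
    (φ.toFun x).1 = (φ.toFun y).1 := by
  rcases x with ⟨i, xu⟩
  rcases y with ⟨i2, yu⟩
  have hi : i = i2 := hxy
  subst hi
  by_contra hne
  obtain ⟨j, hj, hxor⟩ := S.sep_exists hne
  set Q : ↥(S.s i) → Prop := fun u => φ.toFun ⟨i, u⟩ ∈ S.D j with hQ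
  have hQxy : ¬ (Q xu ↔ Q yu) := hxor
  -- first flipping edge
  obtain ⟨p1⟩ := (S.conn i).preconnected xu yu
  obtain ⟨a, b, hab, hfl1⟩ := walk_flip Q p1 hQxy
  have hG1 : S.G.Adj ⟨i, a⟩ ⟨i, b⟩ := (S.emb i).map_adj hab
  have hbr1 : S.bedge j ∈ (φ.walk hG1).edges := by
    by_contra hc
    exact hfl1 (S.walk_same_side hj (φ.walk hG1) hc)
  -- second flipping edge
  have hdel := S.del i s(a, b) hab
  obtain ⟨p2⟩ := hdel.preconnected a b
  obtain ⟨c, d, hcd, hnotmem, hfl2⟩ := walk_flip_del Q p2 hfl1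
  have hG2 : S.G.Adj ⟨i, c⟩ ⟨i, d⟩ := (S.emb i).map_adj hcd
  have hbr2 : S.bedge j ∈ (φ.walk hG2).edges := by
    by_contra hc
    exact hfl2 (S.walk_same_side hj (φ.walk hG2) hc)
  have hnecd : s(c, d) ≠ s(a, b) := fun hc => hnotmem (by rw [hc]; exact rfl)
  exact φ.walk_edgeDisjoint hG2 hG1 (S.sym2_mk_ne hnecd) _ hbr2 hbr1

/-- the walk of a blob edge stays in the image blob. -/
lemma walk_in_blob (φ : Immersion S.G S.G) {x y : S.W} (h : S.G.Adj x y) (hxy : x.1 = y.1) :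
    ∀ z ∈ (φ.walk h).support, z.1 = (φ.toFun x).1 := by
  apply S.support_const
  intro e he j hj hc
  subst hc
  have hnd : (φ.walk h).edges.Nodup := (φ.walk_isPath h).isTrail.edges_nodup
  have := S.walk_opp_side hj (φ.walk h) hnd he
  exact this (S.D_of_fst (S.img_same_blob φ hxy))

/-- immersions fix each blob setwise. -/
lemma toFun_fst (φ : Immersion S.G S.G) (x : S.W) : (φ.toFun x).1 = x.1 := by
  have h0 : (φ.toFun x).1 = (φ.toFun (S.childV x.1)).1 :=
    S.img_same_blob φ (rfl : x.1 = (S.childV x.1).1)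
  rw [h0]
  set i := x.1
  set j := (φ.toFun (S.childV i)).1 with hjdef
  by_contra hne
  apply S.anti i j (fun hc => hne hc.symm)
  -- build an immersion of `Gr i` into `Gr j`
  have hF : ∀ u : ↥(S.s i), (φ.toFun ⟨i, u⟩).1 = j :=
    fun u => S.img_same_blob φ (rfl : (⟨i, u⟩ : S.W).1 = (S.childV i).1)
  set tF : ↥(S.s i) → ↥(S.s j) := fun u => S.castv (φ.toFun ⟨i, u⟩) (hF u) with htF
  have hsupp : ∀ ⦃u v : ↥(S.s i)⦄ (h : (S.Gr i).Adj u v),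
      ∀ z ∈ (φ.walk ((S.emb i).map_adj h)).support, z.1 = j := by
    intro u v h z hz
    have := S.walk_in_blob φ ((S.emb i).map_adj h) rfl z hz
    rw [this]
    exact hF u
  have hex : ∀ ⦃u v : ↥(S.s i)⦄ (h : (S.Gr i).Adj u v),
      ∃ q : (S.Gr j).Walk (tF u) (tF v),
        (φ.walk ((S.emb i).map_adj h)).copy (S.eq_mk _ (hF u)) (S.eq_mk _ (hF v))
          = q.map (S.emb j) :=
    fun u v h => S.blobwalk_pre (φ.walk ((S.emb i).map_adj h)) (hsupp h) (tF u) (tF v)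
      (S.eq_mk _ (hF u)) (S.eq_mk _ (hF v))
  set wk : ∀ ⦃u v : ↥(S.s i)⦄, (S.Gr i).Adj u v → (S.Gr j).Walk (tF u) (tF v) :=
    fun u v h => (hex h).choose with hwk
  have wk_spec : ∀ ⦃u v : ↥(S.s i)⦄ (h : (S.Gr i).Adj u v),
      (φ.walk ((S.emb i).map_adj h)).copy (S.eq_mk _ (hF u)) (S.eq_mk _ (hF v))
        = (wk h).map (S.emb j) := fun u v h => (hex h).choose_spec
  have support_eq : ∀ ⦃u v : ↥(S.s i)⦄ (h : (S.Gr i).Adj u v),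
      List.map (⇑(S.emb j)) (wk h).support = (φ.walk ((S.emb i).map_adj h)).support := by
    intro u v h
    rw [← Walk.support_map, ← wk_spec h]; exact Walk.support_copy _ _ _
  have edges_eq : ∀ ⦃u v : ↥(S.s i)⦄ (h : (S.Gr i).Adj u v),
      List.map (Sym2.map ⇑(S.emb j)) (wk h).edges = (φ.walk ((S.emb i).map_adj h)).edges := by
    intro u v h
    rw [← Walk.edges_map, ← wk_spec h]; exact Walk.edges_copy _ _ _
  have length_eq : ∀ ⦃u v : ↥(S.s i)⦄ (h : (S.Gr i).Adj u v),
      (wk h).length = (φ.walk ((S.emb i).map_adj h)).length := by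
    intro u v h
    rw [← Walk.length_map (S.emb j) (wk h), ← wk_spec h]; exact Walk.length_copy _ _ _
  refine ⟨{ toFun := tF, injective := ?_, walk := wk, walk_isPath := ?_, walk_nontrivial := ?_,
            walk_symm := ?_, walk_edgeDisjoint := ?_, avoid := ?_ }⟩
  · -- injectivity
    intro u u' heq
    have hval : S.vv (φ.toFun ⟨i, u⟩) = S.vv (φ.toFun ⟨i, u'⟩) := congrArg Subtype.val heq
    have := S.vv_injective hval
    exact S.emb_injective i (φ.injective this)
  · -- path
    intro u v h
    rw [Walk.isPath_def]
    have h1 : (φ.walk ((S.emb i).map_adj h)).support.Nodup :=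
      (φ.walk_isPath ((S.emb i).map_adj h)).support_nodup
    rw [← support_eq h] at h1
    exact h1.of_map _
  · -- nontrivial
    intro u v h
    rw [length_eq h]
    exact φ.walk_nontrivial ((S.emb i).map_adj h)
  · -- symm
    intro u v h
    apply Walk.map_injective_of_injective (S.emb_injective j) (tF v) (tF u)
    rw [← wk_spec h.symm]
    have hrev : φ.walk ((S.emb i).map_adj h.symm) = (φ.walk ((S.emb i).map_adj h)).reverse :=
      φ.walk_symm ((S.emb i).map_adj h)
    rw [hrev]
    exact (Walk.reverse_copy _ _ _).symm.trans
      ((congrArg Walk.reverse (wk_spec h)).trans (Walk.reverse_map _ _))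
  · -- edge disjoint
    intro u v u' v' h h' hne' e he1 he2
    have hm1 : Sym2.map (⇑(S.emb j)) e ∈ (φ.walk ((S.emb i).map_adj h)).edges := by
      rw [← edges_eq h]
      exact List.mem_map_of_mem he1
    have hm2 : Sym2.map (⇑(S.emb j)) e ∈ (φ.walk ((S.emb i).map_adj h')).edges := by
      rw [← edges_eq h']
      exact List.mem_map_of_mem he2
    exact φ.walk_edgeDisjoint ((S.emb i).map_adj h) ((S.emb i).map_adj h')
      (S.sym2_mk_ne hne') _ hm1 hm2
  · -- avoid
    intro u v h w hwu hwv hmem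
    have hm : (S.emb j) (tF w) ∈ (φ.walk ((S.emb i).map_adj h)).support := by
      rw [← support_eq h]
      exact List.mem_map_of_mem hmem
    have hWw : (S.emb j) (tF w) = φ.toFun ⟨i, w⟩ := (S.eq_mk _ (hF w)).symm
    rw [hWw] at hm
    exact φ.avoid ((S.emb i).map_adj h) ⟨i, w⟩
      (fun hc => hwu (S.emb_injective i hc))
      (fun hc => hwv (S.emb_injective i hc)) hm

/-- every bridge is used by its own walk. -/
lemma bridge_in_walk (φ : Immersion S.G S.G) {j : ι} (hj : j ≠ S.r) :
    S.bedge j ∈ (φ.walk (S.bedge_adj hj)).edges := by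
  by_contra hnb
  have hside := S.walk_same_side hj (φ.walk (S.bedge_adj hj)) hnb
  have h1 : (φ.toFun (S.pv j)).1 = (S.pv j).1 := S.toFun_fst φ _
  have h2 : (φ.toFun (S.childV j)).1 = (S.childV j).1 := S.toFun_fst φ _
  rw [S.D_of_fst h1, S.D_of_fst h2] at hside
  exact S.pv_not_mem_D hj (hside.2 (S.childV_mem_D j))

/-- every vertex hosts a bridge. -/
lemma exists_bridge (w : S.W) : ∃ j, j ≠ S.r ∧ S.pv j = w := by
  obtain ⟨x, hx⟩ := S.π_surj w
  refine ⟨S.E.symm (some (S.lvl w.1, x)), ?_, ?_⟩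
  · intro hc
    have := S.eq_r_iff.1 hc
    rw [S.E.apply_symm_apply] at this
    exact Option.some_ne_none _ this
  · rw [S.pv_eq (S.E.apply_symm_apply (some (S.lvl w.1, x)))]
    exact hx

lemma fixes (φ : Immersion S.G S.G) : ∀ w, φ.toFun w = w := by
  have claim1 : ∀ w, φ.toFun w ≠ w → ∀ z, φ.toFun z ≠ w := by
    intro w hw z hz
    obtain ⟨j, hj, hpv⟩ := S.exists_bridge w
    have hmem : S.pv j ∈ (φ.walk (S.bedge_adj hj)).support :=
      Walk.fst_mem_support_of_mem_edges _ (S.bridge_in_walk φ hj)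
    by_cases hz1 : z = S.pv j
    · rw [hz1, hpv] at hz
      exact hw hz
    · by_cases hz2 : z = S.childV j
      · have : (φ.toFun z).1 = j := by
          rw [S.toFun_fst φ z, hz2]
          rfl
        rw [hz] at this
        rw [← hpv] at this
        exact S.pv_ne_childV hj this
      · apply φ.avoid (S.bedge_adj hj) z hz1 hz2
        rw [hz, ← hpv]
        exact hmem
  intro w
  by_cases hfw : φ.toFun (φ.toFun w) = φ.toFun w
  · exact φ.injective hfw
  · exact absurd rfl (claim1 (φ.toFun w) hfw w)

end Setup

lemma length_one_edges {V' : Type*} {A : SimpleGraph V'} {u v : V'} (p : A.Walk u v)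
    (h : p.length = 1) : p.edges = [s(u, v)] := by
  cases p with
  | nil => simp at h
  | @cons _ z _ h' q =>
      cases q with
      | nil => rfl
      | cons h'' q' => simp [Walk.length_cons] at h

namespace Setup

variable {U ι : Type} (S : Setup U ι)

lemma trivial_imm (φ : Immersion S.G S.G) : φ.IsTrivial := by
  have hfix := S.fixes φ
  constructor
  · exact hfix
  · intro u v h
    have hsub : ∀ z ∈ (φ.walk h).support, z = u ∨ z = v := by
      intro z hz
      by_contra hc
      push_neg at hc
      have := φ.avoid h z hc.1 hc.2
      rw [hfix z] at this
      exact this hz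
    have hnd : (φ.walk h).support.Nodup := (φ.walk_isPath h).support_nodup
    have hsubl : (φ.walk h).support ⊆ [u, v] := by
      intro z hz
      rcases hsub z hz with rfl | rfl
      · exact List.mem_cons_self
      · exact List.mem_cons_of_mem _ (List.mem_singleton_self _)
    have hlen2 : (φ.walk h).support.length ≤ 2 := (hnd.subperm hsubl).length_le
    have hlen : (φ.walk h).length = 1 := by
      have h1 := (φ.walk h).length_support
      have h2 := φ.walk_nontrivial h
      omega
    have := length_one_edges (φ.walk h) hlen
    rw [this]
    rw [show s(u, v) = s(φ.toFun u, φ.toFun v) by rw [hfix u, hfix v]]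

end Setup
end Rigid


open Rigid in
/-- Given an infinite immersion antichain `𝓗` of pairwise vertex-disjoint infinite
2-edge-connected graphs, each with at most `|𝓗|` vertices, there is a connected graph `G`
whose set of blobs is exactly `𝓗` and which admits no self-immersion but the trivial one. -/
theorem exists_rigid_connected_graph_with_blobs {U ι : Type}
    (s : ι → Set U) (Gr : ∀ i : ι, SimpleGraph (s i))
    (h1 : Infinite ι)
    (h2 : ∀ i j : ι, i ≠ j → Disjoint (s i) (s j))
    (h3 : ∀ i : ι, (s i).Infinite)
    (h4 : ∀ i : ι, TwoEdgeConnected (Gr i))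
    (h5 : ∀ i : ι, Cardinal.mk (s i) ≤ Cardinal.mk ι)
    (h6 : ∀ i j : ι, i ≠ j → ¬ Immersed (Gr i) (Gr j)) :
    ∃ (W : Type) (G : SimpleGraph W) (B : ι → G.Subgraph),
      G.Connected ∧
      Function.Injective B ∧
      (∀ i : ι, IsBlob G (B i)) ∧
      (∀ D : G.Subgraph, IsBlob G D → ∃ i : ι, B i = D) ∧
      (∀ i : ι, Nonempty ((B i).coe ≃g Gr i)) ∧
      (∀ φ : Immersion G G, φ.IsTrivial) := by
  classical
  have haleph : Cardinal.aleph0 ≤ Cardinal.mk ι := Cardinal.infinite_iff.1 h1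
  -- the level structure
  obtain ⟨E⟩ : Nonempty (ι ≃ Option (ℕ × ι)) := by
    rw [← Cardinal.eq]
    rw [Cardinal.mk_option, Cardinal.mk_prod, Cardinal.lift_id, Cardinal.lift_id,
      Cardinal.mk_nat]
    rw [Cardinal.mul_eq_right haleph haleph (by simp [Cardinal.aleph0_ne_zero])]
    rw [Cardinal.add_one_eq haleph]
  have hWle : Cardinal.mk (Σ i : ι, ↥(s i)) ≤ Cardinal.mk ι := by
    rw [Cardinal.mk_sigma]
    calc (Cardinal.sum fun i => Cardinal.mk ↥(s i))
        ≤ Cardinal.sum (fun _ : ι => Cardinal.mk ι) := Cardinal.sum_le_sum _ _ h5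
      _ = Cardinal.mk ι * Cardinal.mk ι := Cardinal.sum_const' ι _
      _ = Cardinal.mk ι := Cardinal.mul_eq_self haleph
  have hatt : ∀ i : ι, ↥(s i) := fun i => ⟨(h3 i).nonempty.some, (h3 i).nonempty.some_mem⟩
  -- surjections onto each level
  have hsurj : ∀ n : ℕ, ∃ f : ι → {w : Σ i : ι, ↥(s i) // lvlOf E w.1 = n},
      Function.Surjective f := by
    intro n
    have hne : Nonempty {w : Σ i : ι, ↥(s i) // lvlOf E w.1 = n} := by
      cases n with
      | zero =>
          refine ⟨⟨⟨E.symm none, hatt _⟩, ?_⟩⟩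
          show (E (E.symm none)).elim 0 _ = 0
          rw [E.apply_symm_apply]
          rfl
      | succ n =>
          obtain ⟨i₀⟩ : Nonempty ι := h1.nonempty
          refine ⟨⟨⟨E.symm (some (n, i₀)), hatt _⟩, ?_⟩⟩
          show (E (E.symm (some (n, i₀)))).elim 0 _ = n + 1
          rw [E.apply_symm_apply]
          rfl
    have hle : Cardinal.mk {w : Σ i : ι, ↥(s i) // lvlOf E w.1 = n} ≤ Cardinal.mk ι := by
      exact le_trans (Cardinal.mk_subtype_le _) hWle
    have ⟨g⟩ : Nonempty ({w : Σ i : ι, ↥(s i) // lvlOf E w.1 = n} ↪ ι) := hle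
    exact ⟨Function.invFun ⇑g, Function.invFun_surjective g.injective⟩
  choose F hF using hsurj
  let S : Setup U ι :=
    { s := s, Gr := Gr, disj := h2,
      conn := fun i => (h4 i).1, edgeNE := fun i => (h4 i).2.1, del := fun i => (h4 i).2.2,
      anti := h6, E := E, att := hatt,
      π := fun n x => (F n x).1,
      π_lvl := fun n x => (F n x).2,
      π_surj := by
        intro w
        obtain ⟨x, hx⟩ := hF (lvlOf E w.1) ⟨w, rfl⟩
        exact ⟨x, congrArg Subtype.val hx⟩ }
  exact ⟨S.W, S.G, S.Bl, S.g_connected, S.bl_injective, S.bl_isBlob,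
    fun D hD => S.blob_surj D hD, fun i => ⟨S.blIso i⟩, fun φ => S.trivial_imm φ⟩
end

section
/- A graph H is immersed in a graph G if and only if H is isomorphic to a graph obtained from G by first deleting a set V of vertices, then deleting a set E of edges, and then lifting a liftable set S of pairwise edge-disjoint finite paths. -/
open SimpleGraph

/-- The graph obtained from `G` by deleting a set `Vdel` of vertices (keeping them as
isolated placeholders) and a set `Edel` of edges. -/
def deletedGraph {W : Type*} (G : SimpleGraph W) (Vdel : Set W) (Edel : Set (Sym2 W)) :
    SimpleGraph W where
  Adj x y := G.Adj x y ∧ s(x, y) ∉ Edel ∧ x ∉ Vdel ∧ y ∉ Vdel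
  symm := by
    constructor
    intro x y h
    exact ⟨h.1.symm, by rw [Sym2.eq_swap]; exact h.2.1, h.2.2.2, h.2.2.1⟩
  loopless := ⟨fun x h => G.irrefl h.1⟩

/-- A system of walks in `G`, recorded together with their endpoints. -/
abbrev PathSys {W : Type*} (G : SimpleGraph W) := Set (Σ a b : W, G.Walk a b)

/-- `w` is an internal vertex of the walk `p`: it lies on `p` but is not an endpoint. -/
def IsInternal {W : Type*} {G : SimpleGraph W} (p : Σ a b : W, G.Walk a b) (w : W) : Prop :=
  w ∈ p.2.2.support ∧ w ≠ p.1 ∧ w ≠ p.2.1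

/-- The vertices surviving the whole operation: vertices not deleted and not internal to
any path of the lifted system `S`. -/
def liftedVerts {W : Type*} (G : SimpleGraph W) (Vdel : Set W) (Edel : Set (Sym2 W))
    (S : PathSys (deletedGraph G Vdel Edel)) : Set W :=
  {w | w ∉ Vdel ∧ ∀ p ∈ S, ¬ IsInternal p w}

/-- The graph obtained from `G` by deleting the vertices in `Vdel`, deleting the edges in
`Edel`, and then lifting the set `S` of paths: internal vertices of paths in `S` are
deleted and the end-vertices of each path in `S` are joined by an edge. -/
def liftedGraph {W : Type*} (G : SimpleGraph W) (Vdel : Set W) (Edel : Set (Sym2 W))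
    (S : PathSys (deletedGraph G Vdel Edel)) :
    SimpleGraph (liftedVerts G Vdel Edel S) where
  Adj x y := x ≠ y ∧ ((deletedGraph G Vdel Edel).Adj x y ∨
    ∃ p ∈ S, (p.1 = (x : W) ∧ p.2.1 = (y : W)) ∨ (p.1 = (y : W) ∧ p.2.1 = (x : W)))
  symm := by
    constructor
    intro x y h
    refine ⟨h.1.symm, ?_⟩
    rcases h.2 with h' | ⟨p, hp, h'⟩
    · exact Or.inl h'.symm
    · exact Or.inr ⟨p, hp, h'.symm⟩
  loopless := ⟨fun x h => h.1 rfl⟩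
section AuxBackward

variable {V W : Type*} {H : SimpleGraph V} {G : SimpleGraph W}
  {Vdel : Set W} {Edel : Set (Sym2 W)} {S : PathSys (deletedGraph G Vdel Edel)}

lemma deleted_le : deletedGraph G Vdel Edel ≤ G := fun _ _ h => h.1

lemma deleted_edges_sub {a b : W} (p : (deletedGraph G Vdel Edel).Walk a b) :
    ∀ e ∈ p.edges, e ∈ G.edgeSet :=
  fun _ he => edgeSet_mono deleted_le (p.edges_subset_edgeSet he)

/-- There is a path in `S` with endpoints `f u` and `f v`. -/
def Pprop (f : H ≃g liftedGraph G Vdel Edel S) (u v : V) : Prop :=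
  ∃ p ∈ S, (p.1 = ((f u : liftedVerts G Vdel Edel S) : W) ∧
      p.2.1 = ((f v : liftedVerts G Vdel Edel S) : W)) ∨
    (p.1 = ((f v : liftedVerts G Vdel Edel S) : W) ∧
      p.2.1 = ((f u : liftedVerts G Vdel Edel S) : W))

lemma Pprop.symm {f : H ≃g liftedGraph G Vdel Edel S} {u v : V} (h : Pprop f u v) :
    Pprop f v u := by
  obtain ⟨p, hp, h⟩ := h; exact ⟨p, hp, h.symm⟩

lemma lifted_adj (f : H ≃g liftedGraph G Vdel Edel S) {u v : V} (h : H.Adj u v) :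
    (liftedGraph G Vdel Edel S).Adj (f u) (f v) := f.map_adj_iff.mpr h

open Classical in
noncomputable def baseWalk (f : H ≃g liftedGraph G Vdel Edel S) {u v : V} (h : H.Adj u v) :
    G.Walk ((f u : liftedVerts G Vdel Edel S) : W) ((f v : liftedVerts G Vdel Edel S) : W) :=
  if hP : Pprop f u v then
    if hc : hP.choose.1 = ((f u : liftedVerts G Vdel Edel S) : W) ∧
        hP.choose.2.1 = ((f v : liftedVerts G Vdel Edel S) : W) then
      (hP.choose.2.2.transfer G (deleted_edges_sub _)).copy hc.1 hc.2
    else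
      (hP.choose.2.2.transfer G (deleted_edges_sub _)).reverse.copy
        ((hP.choose_spec.2.resolve_left hc).2) ((hP.choose_spec.2.resolve_left hc).1)
  else
    SimpleGraph.Walk.cons (((lifted_adj f h).2.resolve_right hP).1) SimpleGraph.Walk.nil

lemma baseWalk_spec (f : H ≃g liftedGraph G Vdel Edel S)
    (hS1 : ∀ p ∈ S, p.2.2.IsPath ∧ 0 < p.2.2.length) {u v : V} (h : H.Adj u v) :
    (baseWalk f h).IsPath ∧ 0 < (baseWalk f h).length ∧
    ((¬ Pprop f u v ∧
        (∀ e ∈ (baseWalk f h).edges,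
          e = s(((f u : liftedVerts G Vdel Edel S) : W), ((f v : liftedVerts G Vdel Edel S) : W))) ∧
        (∀ w ∈ (baseWalk f h).support,
          w = ((f u : liftedVerts G Vdel Edel S) : W) ∨ w = ((f v : liftedVerts G Vdel Edel S) : W))) ∨
      (∃ p ∈ S,
        ((p.1 = ((f u : liftedVerts G Vdel Edel S) : W) ∧
            p.2.1 = ((f v : liftedVerts G Vdel Edel S) : W)) ∨
          (p.1 = ((f v : liftedVerts G Vdel Edel S) : W) ∧
            p.2.1 = ((f u : liftedVerts G Vdel Edel S) : W))) ∧
        (∀ e ∈ (baseWalk f h).edges, e ∈ p.2.2.edges) ∧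
        (∀ w ∈ (baseWalk f h).support, w ∈ p.2.2.support))) := by
  unfold baseWalk
  split_ifs with hP hc
  · obtain ⟨hpS, hor⟩ := hP.choose_spec
    refine ⟨?_, ?_, Or.inr ⟨hP.choose, hpS, Or.inl hc, ?_, ?_⟩⟩
    · rw [SimpleGraph.Walk.isPath_copy]
      exact (hS1 _ hpS).1.transfer _
    · simpa using (hS1 _ hpS).2
    · intro e he; simpa using he
    · intro w hw; simpa using hw
  · obtain ⟨hpS, hor⟩ := hP.choose_spec
    refine ⟨?_, ?_, Or.inr ⟨hP.choose, hpS, Or.inr (hor.resolve_left hc), ?_, ?_⟩⟩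
    · rw [SimpleGraph.Walk.isPath_copy, SimpleGraph.Walk.isPath_reverse_iff]
      exact (hS1 _ hpS).1.transfer _
    · simpa using (hS1 _ hpS).2
    · intro e he; simp only [SimpleGraph.Walk.edges_copy, SimpleGraph.Walk.edges_reverse,
        List.mem_reverse, SimpleGraph.Walk.edges_transfer] at he; exact he
    · intro w hw; simp only [SimpleGraph.Walk.support_copy, SimpleGraph.Walk.support_reverse,
        List.mem_reverse, SimpleGraph.Walk.support_transfer] at hw; exact hw
  · have hd := ((lifted_adj f h).2.resolve_right hP).1
    refine ⟨?_, by simp, Or.inl ⟨hP, ?_, ?_⟩⟩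
    · simp [SimpleGraph.Walk.isPath_def, hd.ne]
    · intro e he; simpa using he
    · intro w hw; simpa using hw

end AuxBackward
section AuxBackward2

variable {V W : Type*} {H : SimpleGraph V} {G : SimpleGraph W}
  {Vdel : Set W} {Edel : Set (Sym2 W)} {S : PathSys (deletedGraph G Vdel Edel)}

noncomputable def walkFn [LinearOrder V] (f : H ≃g liftedGraph G Vdel Edel S) {u v : V}
    (h : H.Adj u v) :
    G.Walk ((f u : liftedVerts G Vdel Edel S) : W) ((f v : liftedVerts G Vdel Edel S) : W) :=
  if u < v then baseWalk f h else (baseWalk f h.symm).reverse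

lemma walkFn_symm [LinearOrder V] (f : H ≃g liftedGraph G Vdel Edel S) {u v : V}
    (h : H.Adj u v) : walkFn f h.symm = (walkFn f h).reverse := by
  unfold walkFn
  rcases lt_trichotomy u v with hlt | rfl | hgt
  · rw [if_pos hlt, if_neg (asymm hlt)]
  · exact absurd rfl h.ne
  · rw [if_neg (asymm hgt), if_pos hgt, SimpleGraph.Walk.reverse_reverse]

lemma walkFn_spec [LinearOrder V] (f : H ≃g liftedGraph G Vdel Edel S)
    (hS1 : ∀ p ∈ S, p.2.2.IsPath ∧ 0 < p.2.2.length) {u v : V} (h : H.Adj u v) :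
    (walkFn f h).IsPath ∧ 0 < (walkFn f h).length ∧
    ((¬ Pprop f u v ∧
        (∀ e ∈ (walkFn f h).edges,
          e = s(((f u : liftedVerts G Vdel Edel S) : W), ((f v : liftedVerts G Vdel Edel S) : W))) ∧
        (∀ w ∈ (walkFn f h).support,
          w = ((f u : liftedVerts G Vdel Edel S) : W) ∨ w = ((f v : liftedVerts G Vdel Edel S) : W))) ∨
      (∃ p ∈ S,
        ((p.1 = ((f u : liftedVerts G Vdel Edel S) : W) ∧
            p.2.1 = ((f v : liftedVerts G Vdel Edel S) : W)) ∨
          (p.1 = ((f v : liftedVerts G Vdel Edel S) : W) ∧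
            p.2.1 = ((f u : liftedVerts G Vdel Edel S) : W))) ∧
        (∀ e ∈ (walkFn f h).edges, e ∈ p.2.2.edges) ∧
        (∀ w ∈ (walkFn f h).support, w ∈ p.2.2.support))) := by
  unfold walkFn
  split_ifs with hlt
  · exact baseWalk_spec f hS1 h
  · obtain ⟨h1, h2, h3⟩ := baseWalk_spec f hS1 h.symm
    refine ⟨h1.reverse, by simpa using h2, ?_⟩
    rcases h3 with ⟨hP, he, hs⟩ | ⟨p, hpS, hor, he, hs⟩
    · refine Or.inl ⟨fun hc => hP hc.symm, ?_, ?_⟩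
      · intro e hee
        rw [SimpleGraph.Walk.edges_reverse, List.mem_reverse] at hee
        rw [he e hee]; exact Sym2.eq_swap
      · intro w hw
        rw [SimpleGraph.Walk.support_reverse, List.mem_reverse] at hw
        exact (hs w hw).symm
    · refine Or.inr ⟨p, hpS, hor.symm, ?_, ?_⟩
      · intro e hee
        rw [SimpleGraph.Walk.edges_reverse, List.mem_reverse] at hee
        exact he e hee
      · intro w hw
        rw [SimpleGraph.Walk.support_reverse, List.mem_reverse] at hw
        exact hs w hw

lemma endpoints_of_edge {q : Σ a b : W, (deletedGraph G Vdel Edel).Walk a b} (hq : q ∈ S)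
    {x y : liftedVerts G Vdel Edel S} (he : s((x : W), (y : W)) ∈ q.2.2.edges) :
    (q.1 = (x : W) ∧ q.2.1 = (y : W)) ∨ (q.1 = (y : W) ∧ q.2.1 = (x : W)) := by
  have hxy : (x : W) ≠ (y : W) := (q.2.2.adj_of_mem_edges he).ne
  have hx : (x : W) = q.1 ∨ (x : W) = q.2.1 := by
    have hmem := q.2.2.fst_mem_support_of_mem_edges he
    have hni := x.2.2 q hq
    by_contra hcon
    push_neg at hcon
    exact hni ⟨hmem, hcon.1, hcon.2⟩
  have hy : (y : W) = q.1 ∨ (y : W) = q.2.1 := by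
    have hmem := q.2.2.snd_mem_support_of_mem_edges he
    have hni := y.2.2 q hq
    by_contra hcon
    push_neg at hcon
    exact hni ⟨hmem, hcon.1, hcon.2⟩
  rcases hx with hx | hx <;> rcases hy with hy | hy
  · exact absurd (hx.trans hy.symm) hxy
  · exact Or.inl ⟨hx.symm, hy.symm⟩
  · exact Or.inr ⟨hy.symm, hx.symm⟩
  · exact absurd (hx.trans hy.symm) hxy

end AuxBackward2
section AuxForward

variable {V W : Type*} {H : SimpleGraph V} {G : SimpleGraph W}

def fwdVdel (φ : Immersion H G) : Set W :=
  {w | (∀ v, φ.toFun v ≠ w) ∧ ∀ ⦃u v : V⦄ (h : H.Adj u v), w ∉ (φ.walk h).support}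

def fwdEdel (φ : Immersion H G) : Set (Sym2 W) :=
  {e | ∀ ⦃u v : V⦄ (h : H.Adj u v), e ∉ (φ.walk h).edges}

lemma fwd_edges_mem (φ : Immersion H G) {u v : V} (h : H.Adj u v) :
    ∀ e ∈ (φ.walk h).edges, e ∈ (deletedGraph G (fwdVdel φ) (fwdEdel φ)).edgeSet := by
  intro e
  induction e using Sym2.ind with
  | _ x y =>
    intro he
    rw [SimpleGraph.mem_edgeSet]
    refine ⟨(φ.walk h).adj_of_mem_edges he, fun hc => hc h he, ?_, ?_⟩
    · intro hc; exact hc.2 h ((φ.walk h).fst_mem_support_of_mem_edges he)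
    · intro hc; exact hc.2 h ((φ.walk h).snd_mem_support_of_mem_edges he)

def fwdS [LinearOrder V] (φ : Immersion H G) :
    PathSys (deletedGraph G (fwdVdel φ) (fwdEdel φ)) :=
  {x | ∃ (u v : V) (h : H.Adj u v), u < v ∧
    x = ⟨φ.toFun u, φ.toFun v, (φ.walk h).transfer _ (fwd_edges_mem φ h)⟩}

lemma fwd_mem_liftedVerts [LinearOrder V] (φ : Immersion H G) (v : V) :
    φ.toFun v ∈ liftedVerts G (fwdVdel φ) (fwdEdel φ) (fwdS φ) := by
  constructor
  · intro hc; exact hc.1 v rfl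
  · rintro q ⟨u', v', h', -, rfl⟩ ⟨hsup, hne1, hne2⟩
    simp only [SimpleGraph.Walk.support_transfer] at hsup
    exact φ.avoid h' v (fun hc => hne1 (congrArg φ.toFun hc))
      (fun hc => hne2 (congrArg φ.toFun hc)) hsup

end AuxForward

/-- `H` is immersed in `G` if and only if `H` is isomorphic to a graph obtained from `G`
by deleting a set of vertices, deleting a set of edges, and then lifting a liftable set
of pairwise edge-disjoint nontrivial finite paths. -/
theorem immersed_iff_delete_lift {V W : Type} (H : SimpleGraph V) (G : SimpleGraph W) :
    Immersed H G ↔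
    ∃ (Vdel : Set W) (Edel : Set (Sym2 W)) (S : PathSys (deletedGraph G Vdel Edel)),
      (∀ p ∈ S, p.2.2.IsPath ∧ 0 < p.2.2.length) ∧
      (∀ p ∈ S, ∀ q ∈ S, p ≠ q → ∀ e ∈ p.2.2.edges, e ∉ q.2.2.edges) ∧
      (∀ p ∈ S, ∀ q ∈ S, ¬ IsInternal q p.1 ∧ ¬ IsInternal q p.2.1) ∧
      Nonempty (H ≃g liftedGraph G Vdel Edel S) := by
  constructor
  · rintro ⟨φ⟩
    letI : LinearOrder V := IsWellOrder.linearOrder WellOrderingRel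
    refine ⟨fwdVdel φ, fwdEdel φ, fwdS φ, ?_, ?_, ?_, ?_⟩
    · rintro p ⟨u, v, h, -, rfl⟩
      exact ⟨(φ.walk_isPath h).transfer _, by simpa using φ.walk_nontrivial h⟩
    · rintro p ⟨u, v, h, huv, rfl⟩ q ⟨u', v', h', huv', rfl⟩ hpq e he he'
      simp only [SimpleGraph.Walk.edges_transfer] at he he'
      refine φ.walk_edgeDisjoint h h' ?_ e he he'
      intro hcon
      apply hpq
      rcases Sym2.eq_iff.mp hcon with ⟨rfl, rfl⟩ | ⟨rfl, rfl⟩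
      · rfl
      · exact absurd huv' (asymm huv)
    · rintro p ⟨u, v, h, -, rfl⟩ q ⟨u', v', h', -, rfl⟩
      constructor
      · rintro ⟨hsup, hne1, hne2⟩
        simp only [SimpleGraph.Walk.support_transfer] at hsup
        exact φ.avoid h' u (fun hc => hne1 (congrArg φ.toFun hc))
          (fun hc => hne2 (congrArg φ.toFun hc)) hsup
      · rintro ⟨hsup, hne1, hne2⟩
        simp only [SimpleGraph.Walk.support_transfer] at hsup
        exact φ.avoid h' v (fun hc => hne1 (congrArg φ.toFun hc))
          (fun hc => hne2 (congrArg φ.toFun hc)) hsup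
    · -- the isomorphism
      have hsurj : ∀ x : liftedVerts G (fwdVdel φ) (fwdEdel φ) (fwdS φ),
          ∃ v, φ.toFun v = (x : W) := by
        rintro ⟨w, hw1, hw2⟩
        by_contra hcon
        push_neg at hcon
        have hw2' : ∀ q ∈ fwdS φ, w ∈ q.2.2.support → w = q.1 ∨ w = q.2.1 := by
          intro q hq hm
          by_contra hc
          push_neg at hc
          exact hw2 q hq ⟨hm, hc.1, hc.2⟩
        have hnotall : ¬ (∀ ⦃u v : V⦄ (h : H.Adj u v), w ∉ (φ.walk h).support) :=
          fun hall => hw1 ⟨fun v hv => hcon v hv, hall⟩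
        push_neg at hnotall
        obtain ⟨u, v, h, hsup⟩ := hnotall
        rcases lt_trichotomy u v with hlt | rfl | hgt
        · have := hw2' ⟨φ.toFun u, φ.toFun v, (φ.walk h).transfer _ (fwd_edges_mem φ h)⟩
            ⟨u, v, h, hlt, rfl⟩ (by simpa using hsup)
          rcases this with hc | hc
          · exact hcon u hc.symm
          · exact hcon v hc.symm
        · exact H.irrefl h
        · have hsup' : w ∈ (φ.walk h.symm).support := by
            rw [φ.walk_symm h, SimpleGraph.Walk.support_reverse, List.mem_reverse]
            exact hsup
          have := hw2' ⟨φ.toFun v, φ.toFun u, (φ.walk h.symm).transfer _ (fwd_edges_mem φ h.symm)⟩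
            ⟨v, u, h.symm, hgt, rfl⟩ (by simpa using hsup')
          rcases this with hc | hc
          · exact hcon v hc.symm
          · exact hcon u hc.symm
      have hbij : Function.Bijective
          (fun v : V => (⟨φ.toFun v, fwd_mem_liftedVerts φ v⟩ :
            liftedVerts G (fwdVdel φ) (fwdEdel φ) (fwdS φ))) := by
        constructor
        · intro a b hab
          exact φ.injective (congrArg Subtype.val hab)
        · intro x
          obtain ⟨v, hv⟩ := hsurj x
          exact ⟨v, Subtype.ext hv⟩
      refine ⟨⟨Equiv.ofBijective _ hbij, ?_⟩⟩
      intro a b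
      show (liftedGraph G (fwdVdel φ) (fwdEdel φ) (fwdS φ)).Adj
        ⟨φ.toFun a, fwd_mem_liftedVerts φ a⟩ ⟨φ.toFun b, fwd_mem_liftedVerts φ b⟩ ↔ H.Adj a b
      constructor
      · rintro ⟨hne, hd | ⟨p, hp, hor⟩⟩
        · have hE : ¬ (∀ ⦃u v : V⦄ (h : H.Adj u v),
              s(φ.toFun a, φ.toFun b) ∉ (φ.walk h).edges) := hd.2.1
          push_neg at hE
          obtain ⟨u, v, h, he⟩ := hE
          have ha := (φ.walk h).fst_mem_support_of_mem_edges he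
          have hb := (φ.walk h).snd_mem_support_of_mem_edges he
          have hab : a ≠ b := fun hc => hne (by rw [hc])
          have hau : a = u ∨ a = v := by
            by_contra hc; push_neg at hc
            exact φ.avoid h a hc.1 hc.2 ha
          have hbv : b = u ∨ b = v := by
            by_contra hc; push_neg at hc
            exact φ.avoid h b hc.1 hc.2 hb
          rcases hau with rfl | rfl <;> rcases hbv with rfl | rfl
          · exact absurd rfl hab
          · exact h
          · exact h.symm
          · exact absurd rfl hab
        · obtain ⟨u, v, h, -, rfl⟩ := hp
          rcases hor with ⟨h1, h2⟩ | ⟨h1, h2⟩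
          · obtain rfl := φ.injective h1
            obtain rfl := φ.injective h2
            exact h
          · obtain rfl := φ.injective h2
            obtain rfl := φ.injective h1
            exact h.symm
      · intro hab
        refine ⟨fun hc => hab.ne (φ.injective (congrArg Subtype.val hc)), Or.inr ?_⟩
        rcases lt_trichotomy a b with hlt | rfl | hgt
        · exact ⟨⟨φ.toFun a, φ.toFun b, (φ.walk hab).transfer _ (fwd_edges_mem φ hab)⟩,
            ⟨a, b, hab, hlt, rfl⟩, Or.inl ⟨rfl, rfl⟩⟩
        · exact absurd hab (H.irrefl)
        · exact ⟨⟨φ.toFun b, φ.toFun a, (φ.walk hab.symm).transfer _ (fwd_edges_mem φ hab.symm)⟩,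
            ⟨b, a, hab.symm, hgt, rfl⟩, Or.inr ⟨rfl, rfl⟩⟩
  · rintro ⟨Vdel, Edel, S, hS1, hS2, hS3, ⟨f⟩⟩
    letI : LinearOrder V := IsWellOrder.linearOrder WellOrderingRel
    have hinj : Function.Injective
        (fun v : V => ((f v : liftedVerts G Vdel Edel S) : W)) := by
      intro a b hab
      exact f.toEquiv.injective (Subtype.val_injective hab)
    refine ⟨⟨fun v => ((f v : liftedVerts G Vdel Edel S) : W), hinj,
      fun u v h => walkFn f h,
      fun u v h => (walkFn_spec f hS1 h).1,
      fun u v h => (walkFn_spec f hS1 h).2.1,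
      fun u v h => walkFn_symm f h, ?_, ?_⟩⟩
    · -- edge-disjointness
      intro u v u' v' h h' hne e he he'
      obtain ⟨-, -, hcase⟩ := walkFn_spec f hS1 h
      obtain ⟨-, -, hcase'⟩ := walkFn_spec f hS1 h'
      have hne' : s(((f u : liftedVerts G Vdel Edel S) : W),
            ((f v : liftedVerts G Vdel Edel S) : W)) ≠
          s(((f u' : liftedVerts G Vdel Edel S) : W),
            ((f v' : liftedVerts G Vdel Edel S) : W)) := by
        intro hcon
        apply hne
        rw [Sym2.eq_iff] at hcon ⊢
        rcases hcon with ⟨h1, h2⟩ | ⟨h1, h2⟩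
        · exact Or.inl ⟨hinj h1, hinj h2⟩
        · exact Or.inr ⟨hinj h1, hinj h2⟩
      rcases hcase with ⟨hP, hee, -⟩ | ⟨p, hpS, hor, hee, -⟩ <;>
        rcases hcase' with ⟨hP', hee', -⟩ | ⟨q, hqS, hor', hee', -⟩
      · exact hne' ((hee e he).symm.trans (hee' e he'))
      · have h2 : s(((f u : liftedVerts G Vdel Edel S) : W),
            ((f v : liftedVerts G Vdel Edel S) : W)) ∈ q.2.2.edges := by
          rw [← hee e he]; exact hee' e he'
        exact hP ⟨q, hqS, endpoints_of_edge hqS h2⟩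
      · have h2 : s(((f u' : liftedVerts G Vdel Edel S) : W),
            ((f v' : liftedVerts G Vdel Edel S) : W)) ∈ p.2.2.edges := by
          rw [← hee' e he']; exact hee e he
        exact hP' ⟨p, hpS, endpoints_of_edge hpS h2⟩
      · by_cases hpq : p = q
        · subst hpq
          apply hne'
          rw [Sym2.eq_iff]
          rcases hor with ⟨e1, e2⟩ | ⟨e1, e2⟩ <;> rcases hor' with ⟨e3, e4⟩ | ⟨e3, e4⟩
          · exact Or.inl ⟨e1.symm.trans e3, e2.symm.trans e4⟩
          · exact Or.inr ⟨e1.symm.trans e3, e2.symm.trans e4⟩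
          · exact Or.inr ⟨e2.symm.trans e4, e1.symm.trans e3⟩
          · exact Or.inl ⟨e2.symm.trans e4, e1.symm.trans e3⟩
        · exact hS2 p hpS q hqS hpq e (hee e he) (hee' e he')
    · -- avoid
      intro u v h w hwu hwv hsup
      obtain ⟨-, -, hcase⟩ := walkFn_spec f hS1 h
      rcases hcase with ⟨-, -, hs⟩ | ⟨p, hpS, hor, -, hs⟩
      · rcases hs _ hsup with hc | hc
        · exact hwu (hinj hc)
        · exact hwv (hinj hc)
      · have hint := (f w).2.2 p hpS
        have hmem := hs _ hsup
        have hend : ((f w : liftedVerts G Vdel Edel S) : W) = p.1 ∨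
            ((f w : liftedVerts G Vdel Edel S) : W) = p.2.1 := by
          by_contra hcon; push_neg at hcon
          exact hint ⟨hmem, hcon.1, hcon.2⟩
        rcases hend with hc | hc <;> rcases hor with ⟨e1, e2⟩ | ⟨e1, e2⟩
        · exact hwu (hinj (hc.trans e1))
        · exact hwv (hinj (hc.trans e1))
        · exact hwv (hinj (hc.trans e2))
        · exact hwu (hinj (hc.trans e2))
end
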